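/- arXiv:1911.12269 — 9 statements merged into one kernel-verified Lean document; each statement's English description precedes it below -/
import Mathlib

section
/- Let m1 ≥ m2 ≥ m3 > 0 with m1 + m2 + m3 = 1 and suppose m1·m2 + m2·m3 + m1·m3 ≤ 1/27. Then m1 > (√69 + 9)/18 and m2 + m3 < 1 − (√69 + 9)/18. -/
theorem stmt_1 (m1 m2 m3 : ℝ) (h3 : 0 < m3) (h23 : m3 ≤ m2) (h12 : m2 ≤ m1)
    (hsum : m1 + m2 + m3 = 1)
    (hβ : m1*m2 + m2*m3 + m1*m3 ≤ 1/27) :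
    m1 > (Real.sqrt 69 + 9) / 18 ∧ m2 + m3 < 1 - (Real.sqrt 69 + 9) / 18 := by
  have hs : Real.sqrt 69 ^ 2 = 69 := Real.sq_sqrt (by norm_num)
  have hs8 : (8:ℝ) < Real.sqrt 69 := by
    nlinarith [Real.sqrt_nonneg 69]
  have h13 : (1:ℝ)/3 ≤ m1 := by linarith
  have hkey : 27 * m1^2 - 27 * m1 + 1 > 0 := by nlinarith [mul_pos (lt_of_lt_of_le h3 h23) h3]
  have h1 : m1 > (Real.sqrt 69 + 9) / 18 := by nlinarith [hs8, hkey]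
  exact ⟨h1, by linarith⟩
end

section
/- For β ∈ (0, 1/27), the quartic polynomial f(x) = x² + β^{3/2}·(4 − (λ5 + λ6)/β^{3/2})·x + λ5·λ6, where λ5 = (3/2)(1 − √(1 − 3β))β^{3/2} and λ6 = (3/2)(1 + √(1 − 3β))β^{3/2}, has two distinct negative real roots x (as a polynomial in x = s², i.e., the corresponding eigenvalues ±√x·i are purely imaginary and distinct) if and only if β < 1/27. Equivalently: the discriminant (4β^{3/2} − λ5 − λ6)² − 4λ5λ6 > 0, λ5λ6 > 0, and 4β^{3/2} > λ5 + λ6 hold simultaneously exactly when 0 < β < 1/27. -/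
theorem stmt_3 (β : ℝ) (hβ0 : 0 < β) (hβ1 : β ≤ 1/3)
    (lam5 lam6 : ℝ)
    (h5 : lam5 = (3/2) * (1 - Real.sqrt (1 - 3*β)) * β ^ ((3:ℝ)/2))
    (h6 : lam6 = (3/2) * (1 + Real.sqrt (1 - 3*β)) * β ^ ((3:ℝ)/2)) :
    ((4 * β ^ ((3:ℝ)/2) - lam5 - lam6)^2 - 4 * lam5 * lam6 > 0 ∧
      lam5 * lam6 > 0 ∧
      4 * β ^ ((3:ℝ)/2) > lam5 + lam6) ↔ β < 1/27 := by
  have hL : (0:ℝ) < β ^ ((3:ℝ)/2) := Real.rpow_pos_of_pos hβ0 _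
  have hs : Real.sqrt (1 - 3*β) ^ 2 = 1 - 3*β :=
    Real.sq_sqrt (by linarith)
  set L := β ^ ((3:ℝ)/2)
  constructor
  · rintro ⟨h1, _, _⟩
    rw [h5, h6] at h1
    nlinarith [sq_nonneg L, mul_pos hL hL]
  · intro h
    refine ⟨?_, ?_, ?_⟩
    · rw [h5, h6]; nlinarith [mul_pos hL hL]
    · rw [h5, h6]; nlinarith [mul_pos hL hL]
    · rw [h5, h6]; nlinarith
end

section
/- With ω0 = β^{3/4}, ω1 = μ1·ω0, ω2 = μ2·ω0 where μ1 = √((1 − √(1 − 27β))/2), μ2 = √((1 + √(1 − 27β))/2) and β ∈ (0, 1/27): the resonance relation ω2 − 2ω1 = 0 holds if and only if β = 16/675. -/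
theorem stmt_6 (β : ℝ) (hβ0 : 0 < β) (hβ1 : β < 1/27)
    (μ1 μ2 ω0 ω1 ω2 : ℝ)
    (hμ1 : μ1 = Real.sqrt ((1 - Real.sqrt (1 - 27*β)) / 2))
    (hμ2 : μ2 = Real.sqrt ((1 + Real.sqrt (1 - 27*β)) / 2))
    (hω0 : ω0 = β ^ ((3:ℝ)/4)) (hω1 : ω1 = μ1 * ω0) (hω2 : ω2 = μ2 * ω0) :
    ω2 - 2*ω1 = 0 ↔ β = 16/675 := by
  have hω0pos : 0 < ω0 := hω0 ▸ Real.rpow_pos_of_pos hβ0 _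
  set s := Real.sqrt (1 - 27*β) with hs
  have hs0 : 0 ≤ 1 - 27*β := by linarith
  have hsnn : 0 ≤ s := Real.sqrt_nonneg _
  have hssq : s ^ 2 = 1 - 27*β := Real.sq_sqrt hs0
  have hsle1 : s ≤ 1 := by
    rw [hs]
    calc Real.sqrt (1 - 27*β) ≤ Real.sqrt 1 := Real.sqrt_le_sqrt (by linarith)
    _ = 1 := Real.sqrt_one
  have key : ω2 - 2*ω1 = 0 ↔ μ2 = 2*μ1 := by
    rw [hω1, hω2]
    constructor
    · intro h
      have : (μ2 - 2*μ1) * ω0 = 0 := by ring_nf; ring_nf at h; linarith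
      rcases mul_eq_zero.1 this with h' | h'
      · linarith
      · exact absurd h' (ne_of_gt hω0pos)
    · intro h; rw [h]; ring
  rw [key, hμ1, hμ2]
  constructor
  · intro h
    have hμ1nn : 0 ≤ Real.sqrt ((1 - s)/2) := Real.sqrt_nonneg _
    have hsq : (1 + s)/2 = 4 * ((1 - s)/2) := by
      have := congrArg (· ^ 2) h
      simp only [mul_pow] at this
      rw [Real.sq_sqrt (by linarith : (0:ℝ) ≤ (1 + s)/2),
        Real.sq_sqrt (by linarith : (0:ℝ) ≤ (1 - s)/2)] at this
      linarith
    have hs35 : s = 3/5 := by linarith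
    have : (3/5 : ℝ)^2 = 1 - 27*β := by rw [← hs35]; exact hssq
    nlinarith
  · intro h
    subst h
    have hse : s = 3/5 := by
      rw [hs]
      rw [show (1 - 27*(16/675 : ℝ)) = (3/5)^2 by norm_num]
      exact Real.sqrt_sq (by norm_num)
    rw [hse]
    rw [show ((1 + 3/5 : ℝ))/2 = 4 * ((1 - 3/5)/2) by norm_num]
    rw [Real.sqrt_mul (by norm_num) _, show (4:ℝ) = 2^2 by norm_num,
      Real.sqrt_sq (by norm_num : (0:ℝ) ≤ 2)]
end

section
/- With ω0 = β^{3/4}, ω1 = μ1·ω0, ω2 = μ2·ω0 where μ1 = √((1 − √(1 − 27β))/2), μ2 = √((1 + √(1 − 27β))/2) and β ∈ (0, 1/27): the resonance relation ω0 + ω1 − 2ω2 = 0 holds if and only if β = 64/1875. -/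
theorem stmt_8 (β : ℝ) (hβ0 : 0 < β) (hβ1 : β < 1/27)
    (μ1 μ2 ω0 ω1 ω2 : ℝ)
    (hμ1 : μ1 = Real.sqrt ((1 - Real.sqrt (1 - 27*β)) / 2))
    (hμ2 : μ2 = Real.sqrt ((1 + Real.sqrt (1 - 27*β)) / 2))
    (hω0 : ω0 = β ^ ((3:ℝ)/4)) (hω1 : ω1 = μ1 * ω0) (hω2 : ω2 = μ2 * ω0) :
    ω0 + ω1 - 2*ω2 = 0 ↔ β = 64/1875 := by
  have hω0pos : 0 < ω0 := by rw [hω0]; exact Real.rpow_pos_of_pos hβ0 _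
  set s := Real.sqrt (1 - 27*β) with hs
  have hnn : (0:ℝ) ≤ 1 - 27*β := by linarith
  have hs0 : 0 ≤ s := Real.sqrt_nonneg _
  have hs2 : s^2 = 1 - 27*β := Real.sq_sqrt hnn
  have hs1 : s ≤ 1 := by nlinarith
  have hμ1nn : 0 ≤ μ1 := by rw [hμ1]; exact Real.sqrt_nonneg _
  have hμ2nn : 0 ≤ μ2 := by rw [hμ2]; exact Real.sqrt_nonneg _
  have hμ1sq : μ1^2 = (1 - s)/2 := by
    rw [hμ1]; exact Real.sq_sqrt (by linarith)
  have hμ2sq : μ2^2 = (1 + s)/2 := by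
    rw [hμ2]; exact Real.sq_sqrt (by linarith)
  constructor
  · intro h
    rw [hω1, hω2] at h
    have h1 : 1 + μ1 - 2*μ2 = 0 := by
      have : (1 + μ1 - 2*μ2) * ω0 = 0 := by ring_nf; ring_nf at h; linarith
      rcases mul_eq_zero.mp this with h' | h'
      · exact h'
      · exact absurd h' (ne_of_gt hω0pos)
    have hsq : (1 + μ1)^2 = (2*μ2)^2 := by
      have : 1 + μ1 = 2*μ2 := by linarith
      rw [this]
    have hμ1val : μ1 = (1 + 5*s)/4 := by nlinarith
    have hquad : (25*s - 7)*(s + 1) = 0 := by nlinarith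
    have hs7 : s = 7/25 := by
      rcases mul_eq_zero.mp hquad with h' | h'
      · linarith
      · linarith
    rw [hs7] at hs2; norm_num at hs2; linarith
  · intro h
    subst h
    have hval : (1:ℝ) - 27*(64/1875) = (7/25)^2 := by norm_num
    have hs7 : s = 7/25 := by
      rw [hs, hval, Real.sqrt_sq (by norm_num : (0:ℝ) ≤ 7/25)]
    have hm1 : μ1 = 3/5 := by
      rw [hμ1, hs7]
      rw [show ((1:ℝ) - 7/25)/2 = (3/5)^2 by norm_num]
      exact Real.sqrt_sq (by norm_num)
    have hm2 : μ2 = 4/5 := by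
      rw [hμ2, hs7]
      rw [show ((1:ℝ) + 7/25)/2 = (4/5)^2 by norm_num]
      exact Real.sqrt_sq (by norm_num)
    rw [hω1, hω2, hm1, hm2]; ring
end

section
/- With ω0 = β^{3/4}, ω1 = μ1·ω0, ω2 = μ2·ω0 where μ1 = √((1 − √(1 − 27β))/2), μ2 = √((1 + √(1 − 27β))/2) and β ∈ (0, 1/27): the resonance relation ω2 − 3ω1 = 0 holds if and only if β = 1/75. -/
theorem stmt_9 (β : ℝ) (hβ0 : 0 < β) (hβ1 : β < 1/27)
    (μ1 μ2 ω0 ω1 ω2 : ℝ)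
    (hμ1 : μ1 = Real.sqrt ((1 - Real.sqrt (1 - 27*β)) / 2))
    (hμ2 : μ2 = Real.sqrt ((1 + Real.sqrt (1 - 27*β)) / 2))
    (hω0 : ω0 = β ^ ((3:ℝ)/4)) (hω1 : ω1 = μ1 * ω0) (hω2 : ω2 = μ2 * ω0) :
    ω2 - 3*ω1 = 0 ↔ β = 1/75 := by
  have hω0pos : 0 < ω0 := by rw [hω0]; exact Real.rpow_pos_of_pos hβ0 _
  set s := Real.sqrt (1 - 27*β) with hs
  have h1 : (0:ℝ) < 1 - 27*β := by linarith
  have hspos : 0 < s := Real.sqrt_pos.mpr h1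
  have hslt : s < 1 := by
    rw [hs]
    nlinarith [Real.sq_sqrt h1.le, Real.sqrt_nonneg (1 - 27*β)]
  have hssq : s^2 = 1 - 27*β := Real.sq_sqrt h1.le
  have hμ1sq : μ1^2 = (1 - s)/2 := by
    rw [hμ1]; exact Real.sq_sqrt (by linarith)
  have hμ2sq : μ2^2 = (1 + s)/2 := by
    rw [hμ2]; exact Real.sq_sqrt (by linarith)
  have hμ1nn : 0 ≤ μ1 := hμ1 ▸ Real.sqrt_nonneg _
  have hμ2nn : 0 ≤ μ2 := hμ2 ▸ Real.sqrt_nonneg _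
  constructor
  · intro h
    have hμ : μ2 = 3 * μ1 := by
      have : (μ2 - 3*μ1) * ω0 = 0 := by rw [hω2, hω1] at h; ring_nf; ring_nf at h; linarith
      have := mul_eq_zero.mp this
      rcases this with h' | h'
      · linarith
      · exact absurd h' (ne_of_gt hω0pos)
    have hsq : μ2^2 = 9 * μ1^2 := by rw [hμ]; ring
    rw [hμ1sq, hμ2sq] at hsq
    have hs45 : s = 4/5 := by linarith
    have : 1 - 27*β = 16/25 := by rw [← hssq, hs45]; norm_num
    linarith
  · intro h
    subst h
    have hsval : s = 4/5 := by
      rw [hs]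
      rw [show (1 : ℝ) - 27*(1/75) = (4/5)^2 by norm_num]
      exact Real.sqrt_sq (by norm_num)
    have hμ1pos : 0 < μ1 := by
      rw [hμ1]; exact Real.sqrt_pos.mpr (by linarith)
    have hμ : μ2 = 3 * μ1 := by
      have h2 : (μ2 - 3*μ1) * (μ2 + 3*μ1) = 0 := by nlinarith [hμ1sq, hμ2sq, hsval]
      rcases mul_eq_zero.mp h2 with h' | h'
      · linarith
      · linarith
    rw [hω2, hω1, hμ]; ring
end

section
/- The set of β ∈ (0, 1/27) for which there exist integers (k0, k1, k2) ≠ (0,0,0) with k0·ω0 − k1·ω1 + k2·ω2 = 0, where ω0 = β^{3/4}, ω1 = μ1·ω0, ω2 = μ2·ω0 with μ1 = √((1 − √(1 − 27β))/2), μ2 = √((1 + √(1 − 27β))/2), is a countable dense subset of (0, 1/27). -/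
open Real Set Polynomial

noncomputable def rmu2 (β : ℝ) : ℝ := Real.sqrt ((1 + Real.sqrt (1 - 27*β)) / 2)
noncomputable def rinv (m : ℝ) : ℝ := (1 - (2*m^2 - 1)^2)/27

lemma rinv_rmu2 {β : ℝ} (hβ : β ∈ Set.Ioo (0:ℝ) (1/27)) : rinv (rmu2 β) = β := by
  obtain ⟨h0, h1⟩ := hβ
  have hs0 : (0:ℝ) ≤ 1 - 27*β := by linarith
  have hs2 : Real.sqrt (1 - 27*β) ^ 2 = 1 - 27*β := Real.sq_sqrt hs0
  have hsnn : (0:ℝ) ≤ Real.sqrt (1 - 27*β) := Real.sqrt_nonneg _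
  have hm2 : rmu2 β ^ 2 = (1 + Real.sqrt (1 - 27*β)) / 2 :=
    Real.sq_sqrt (by linarith)
  unfold rinv
  rw [hm2]
  nlinarith [hs2]

lemma rmu2_mem {β : ℝ} (hβ : β ∈ Set.Ioo (0:ℝ) (1/27)) :
    rmu2 β ∈ Set.Ioo (Real.sqrt (1/2)) 1 := by
  obtain ⟨h0, h1⟩ := hβ
  have hs0 : (0:ℝ) < 1 - 27*β := by linarith
  have hspos : 0 < Real.sqrt (1 - 27*β) := Real.sqrt_pos.2 hs0
  have hslt : Real.sqrt (1 - 27*β) < 1 := by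
    rw [Real.sqrt_lt' one_pos]; nlinarith
  constructor
  · exact Real.sqrt_lt_sqrt (by norm_num) (by linarith)
  · rw [rmu2, Real.sqrt_lt' one_pos]; nlinarith

lemma rmu2_rinv {q : ℝ} (hq : q ∈ Set.Ioo (Real.sqrt (1/2)) 1) :
    rmu2 (rinv q) = q ∧ rinv q ∈ Set.Ioo (0:ℝ) (1/27) := by
  obtain ⟨hq1, hq2⟩ := hq
  have hqpos : 0 < q := lt_of_le_of_lt (Real.sqrt_nonneg _) hq1
  have hq2' : q^2 < 1 := by nlinarith
  have hhalf : (1:ℝ)/2 < q^2 := (Real.sqrt_lt' hqpos).1 hq1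
  have hkey : 1 - 27 * rinv q = (2*q^2-1)^2 := by unfold rinv; ring
  have hsq : Real.sqrt (1 - 27 * rinv q) = 2*q^2 - 1 := by
    rw [hkey]; exact Real.sqrt_sq (by linarith)
  constructor
  · unfold rmu2
    rw [hsq, show (1 + (2*q^2-1))/2 = q^2 by ring]
    exact Real.sqrt_sq hqpos.le
  · constructor
    · unfold rinv; nlinarith
    · unfold rinv; nlinarith

/-- The resonant set of mass parameters β for the Lagrange relative equilibrium. -/
theorem stmt_10 :
    Set.Countable {β : ℝ | β ∈ Set.Ioo (0:ℝ) (1/27) ∧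
      ∃ k0 k1 k2 : ℤ, ¬(k0 = 0 ∧ k1 = 0 ∧ k2 = 0) ∧
        (k0 : ℝ) * (β ^ ((3:ℝ)/4))
          - (k1 : ℝ) * (Real.sqrt ((1 - Real.sqrt (1 - 27*β)) / 2) * β ^ ((3:ℝ)/4))
          + (k2 : ℝ) * (Real.sqrt ((1 + Real.sqrt (1 - 27*β)) / 2) * β ^ ((3:ℝ)/4)) = 0} ∧
    Set.Ioo (0:ℝ) (1/27) ⊆ closure {β : ℝ | β ∈ Set.Ioo (0:ℝ) (1/27) ∧
      ∃ k0 k1 k2 : ℤ, ¬(k0 = 0 ∧ k1 = 0 ∧ k2 = 0) ∧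
        (k0 : ℝ) * (β ^ ((3:ℝ)/4))
          - (k1 : ℝ) * (Real.sqrt ((1 - Real.sqrt (1 - 27*β)) / 2) * β ^ ((3:ℝ)/4))
          + (k2 : ℝ) * (Real.sqrt ((1 + Real.sqrt (1 - 27*β)) / 2) * β ^ ((3:ℝ)/4)) = 0} := by
  have hfac : ∀ β ∈ Set.Ioo (0:ℝ) (1/27), ∀ k0 k1 k2 : ℤ,
      ((k0 : ℝ) * (β ^ ((3:ℝ)/4))
        - (k1 : ℝ) * (Real.sqrt ((1 - Real.sqrt (1 - 27*β)) / 2) * β ^ ((3:ℝ)/4))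
        + (k2 : ℝ) * (Real.sqrt ((1 + Real.sqrt (1 - 27*β)) / 2) * β ^ ((3:ℝ)/4)) = 0)
      ↔ ((k0 : ℝ) - (k1 : ℝ) * Real.sqrt ((1 - Real.sqrt (1 - 27*β)) / 2)
          + (k2 : ℝ) * rmu2 β = 0) := by
    intro β hβ k0 k1 k2
    have hw : (0:ℝ) < β ^ ((3:ℝ)/4) := Real.rpow_pos_of_pos hβ.1 _
    rw [show (k0 : ℝ) * (β ^ ((3:ℝ)/4))
        - (k1 : ℝ) * (Real.sqrt ((1 - Real.sqrt (1 - 27*β)) / 2) * β ^ ((3:ℝ)/4))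
        + (k2 : ℝ) * (Real.sqrt ((1 + Real.sqrt (1 - 27*β)) / 2) * β ^ ((3:ℝ)/4))
        = ((k0 : ℝ) - (k1 : ℝ) * Real.sqrt ((1 - Real.sqrt (1 - 27*β)) / 2)
          + (k2 : ℝ) * rmu2 β) * (β ^ ((3:ℝ)/4)) by unfold rmu2; ring]
    rw [mul_eq_zero]
    simp [hw.ne']
  constructor
  · -- countability
    have hsub : {β : ℝ | β ∈ Set.Ioo (0:ℝ) (1/27) ∧
      ∃ k0 k1 k2 : ℤ, ¬(k0 = 0 ∧ k1 = 0 ∧ k2 = 0) ∧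
        (k0 : ℝ) * (β ^ ((3:ℝ)/4))
          - (k1 : ℝ) * (Real.sqrt ((1 - Real.sqrt (1 - 27*β)) / 2) * β ^ ((3:ℝ)/4))
          + (k2 : ℝ) * (Real.sqrt ((1 + Real.sqrt (1 - 27*β)) / 2) * β ^ ((3:ℝ)/4)) = 0}
        ⊆ ⋃ k : ℤ × ℤ × ℤ, {β : ℝ | β ∈ Set.Ioo (0:ℝ) (1/27) ∧
        ¬(k.1 = 0 ∧ k.2.1 = 0 ∧ k.2.2 = 0) ∧
        ((k.1 : ℝ) - (k.2.1 : ℝ) * Real.sqrt ((1 - Real.sqrt (1 - 27*β)) / 2)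
          + (k.2.2 : ℝ) * rmu2 β = 0)} := by
      rintro β ⟨hβ, k0, k1, k2, hk, heq⟩
      exact Set.mem_iUnion.2 ⟨(k0, k1, k2), hβ, hk, (hfac β hβ k0 k1 k2).1 heq⟩
    refine Set.Countable.mono hsub (Set.countable_iUnion fun k => ?_)
    obtain ⟨k0, k1, k2⟩ := k
    apply Set.Finite.countable
    by_cases hk12 : k1 = 0 ∧ k2 = 0
    · -- then any solution forces k0 = 0, impossible
      obtain ⟨rfl, rfl⟩ := hk12
      convert Set.finite_empty
      ext β
      simp only [Set.mem_setOf_eq, Set.mem_empty_iff_false, iff_false]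
      rintro ⟨hβ, hk', heq⟩
      simp only [Int.cast_zero, zero_mul, sub_zero, add_zero] at heq
      have hk0 : k0 = 0 := by exact_mod_cast heq
      exact hk' (by simp [hk0])
    · -- quadratic in rmu2 β
      set a : ℝ := -((k1:ℝ)^2 + (k2:ℝ)^2) with ha
      have hane : a ≠ 0 := by
        have hpos : (0:ℝ) < (k1:ℝ)^2 + (k2:ℝ)^2 := by
          rcases (not_and_or.1 hk12) with h | h
          · have h1 : (k1:ℝ) ≠ 0 := Int.cast_ne_zero.2 h
            positivity
          · have h2 : (k2:ℝ) ≠ 0 := Int.cast_ne_zero.2 h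
            positivity
        rw [ha]; intro h; rw [neg_eq_zero] at h; linarith
      set p : ℝ[X] := C a * X^2 + C (-(2*(k0:ℝ)*(k2:ℝ))) * X + C ((k1:ℝ)^2 - (k0:ℝ)^2)
        with hp
      have hpne : p ≠ 0 := by
        intro h
        have hc2 : p.coeff 2 = a := by
          rw [hp]
          rw [Polynomial.coeff_add, Polynomial.coeff_add, Polynomial.coeff_C_mul,
            Polynomial.coeff_C_mul, Polynomial.coeff_X_pow, Polynomial.coeff_X,
            Polynomial.coeff_C]
          norm_num
        rw [h] at hc2
        simp at hc2
        exact hane hc2.symm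
      have hroots : ∀ β ∈ {β : ℝ | β ∈ Set.Ioo (0:ℝ) (1/27) ∧
          ¬(k0 = 0 ∧ k1 = 0 ∧ k2 = 0) ∧
          ((k0 : ℝ) - (k1 : ℝ) * Real.sqrt ((1 - Real.sqrt (1 - 27*β)) / 2)
            + (k2 : ℝ) * rmu2 β = 0)}, p.IsRoot (rmu2 β) := by
        rintro β ⟨hβ, _, heq⟩
        obtain ⟨h0, h1⟩ := hβ
        have hsnn : 0 ≤ Real.sqrt (1 - 27*β) := Real.sqrt_nonneg _
        have hsle : Real.sqrt (1 - 27*β) ≤ 1 := by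
          have h := Real.sqrt_le_sqrt (show 1 - 27*β ≤ 1 by linarith)
          simpa using h
        set s := Real.sqrt (1 - 27*β) with hs
        set m1 := Real.sqrt ((1 - s) / 2) with hm1
        have hm2def : rmu2 β = Real.sqrt ((1 + s) / 2) := rfl
        set m2 := rmu2 β with hm2
        have hm1sq : m1^2 = (1 - s)/2 := Real.sq_sqrt (by linarith)
        have hm2sq : m2^2 = (1 + s)/2 := by
          rw [hm2def]; exact Real.sq_sqrt (by linarith)
        have hcomb : m1^2 = 1 - m2^2 := by rw [hm1sq, hm2sq]; ring
        have : a * m2^2 + (-(2*(k0:ℝ)*(k2:ℝ))) * m2 + ((k1:ℝ)^2 - (k0:ℝ)^2) = 0 := by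
          rw [ha]
          linear_combination (-(k1:ℝ)*m1 - (k0:ℝ) - (k2:ℝ)*m2) * heq - (k1:ℝ)^2 * hcomb
        simpa [hp, Polynomial.IsRoot, Polynomial.eval_add, Polynomial.eval_mul] using this
      apply Set.Finite.of_finite_image (f := rmu2)
      · apply (Polynomial.finite_setOf_isRoot hpne).subset
        rintro x ⟨β, hβmem, rfl⟩
        exact hroots β hβmem
      · intro x hx y hy hxy
        rw [← rinv_rmu2 hx.1, ← rinv_rmu2 hy.1, hxy]
  · -- density
    intro β hβ
    rw [Metric.mem_closure_iff]
    intro ε hε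
    have hc : ContinuousAt rinv (rmu2 β) := by
      unfold rinv; fun_prop
    obtain ⟨δ, hδ, hcont⟩ := Metric.continuousAt_iff.1 hc ε hε
    obtain ⟨hm1, hm2⟩ := rmu2_mem hβ
    have hlt : max (Real.sqrt (1/2)) (rmu2 β - δ) < min 1 (rmu2 β + δ) :=
      max_lt (lt_min (hm1.trans hm2) (by linarith)) (lt_min (by linarith) (by linarith))
    obtain ⟨q, hq1, hq2⟩ := exists_rat_btwn hlt
    have hq_mem : (q : ℝ) ∈ Set.Ioo (Real.sqrt (1/2)) 1 :=
      ⟨(le_max_left _ _).trans_lt hq1, hq2.trans_le (min_le_left _ _)⟩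
    have hq_close : dist (q : ℝ) (rmu2 β) < δ := by
      rw [Real.dist_eq, abs_lt]
      constructor
      · have := (le_max_right _ _).trans_lt hq1; linarith
      · have := hq2.trans_le (min_le_right _ _); linarith
    obtain ⟨hmq, hβ'⟩ := rmu2_rinv hq_mem
    refine ⟨rinv (q : ℝ), ⟨hβ', ?_⟩, ?_⟩
    · -- resonance at rinv q with k = (-q.num, 0, q.den)
      refine ⟨-q.num, 0, (q.den : ℤ), ?_, ?_⟩
      · rintro ⟨-, -, hden⟩
        exact q.den_nz (by exact_mod_cast hden)
      · rw [hfac _ hβ']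
        rw [hmq]
        push_cast
        have : (q.den : ℝ) ≠ 0 := by positivity
        rw [Rat.cast_def]
        field_simp
        ring
      -- done
    · have hd := hcont hq_close
      rw [rinv_rmu2 hβ] at hd
      rw [dist_comm] at hd
      exact hd
end

section
/- Fix υ > 6. The set of β ∈ (0, 1/27) such that the frequency vector ϖ = (ω0, −ω1, ω2) (with ω0 = β^{3/4}, ω1 = μ1ω0, ω2 = μ2ω0, μ1 = √((1 − √(1 − 27β))/2), μ2 = √((1 + √(1 − 27β))/2)) is (c, υ)-Diophantine for some c > 0 — i.e., |k0ω0 − k1ω1 + k2ω2| ≥ c/|k|^υ for all nonzero k ∈ ℤ³ with |k| = |k0| + |k1| + |k2| — has full Lebesgue measure in (0, 1/27). -/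
open MeasureTheory Set
open scoped ENNReal

noncomputable def sw (j : ℤ) : ℝ := (1 + |(j : ℝ)|) ^ (-(9/8) : ℝ)

lemma sw_pos (j : ℤ) : 0 < sw j := Real.rpow_pos_of_pos (by positivity) _

lemma sw_summable : Summable sw := by
  have base : Summable (fun n : ℕ => ((n : ℝ) + 1) ^ (-(9/8) : ℝ)) := by
    have h := Real.summable_one_div_nat_rpow.mpr (by norm_num : (1:ℝ) < 9/8)
    have h2 := (summable_nat_add_iff 1).mpr h
    refine h2.congr fun n => ?_
    rw [Real.rpow_neg (by positivity), one_div]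
    push_cast
    ring_nf
  apply Summable.of_nat_of_neg
  · refine base.congr fun n => ?_
    unfold sw
    rw [Int.cast_natCast, abs_of_nonneg (by positivity : (0:ℝ) ≤ (n:ℝ)), add_comm]
  · refine base.congr fun n => ?_
    unfold sw
    rw [Int.cast_neg, Int.cast_natCast, abs_neg,
      abs_of_nonneg (by positivity : (0:ℝ) ≤ (n:ℝ)), add_comm]

lemma quad_sublevel (A b C δ : ℝ) (hA : 0 < A) :
    ∃ r₁ r₂ : ℝ, ∀ s : ℝ, |A*s^2 + b*s + C| < δ →
      |s - r₁| < Real.sqrt (δ/A) ∨ |s - r₂| < Real.sqrt (δ/A) := by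
  have habs : ∀ t s : ℝ, A * (s - t)^2 < δ → |s - t| < Real.sqrt (δ/A) := by
    intro t s hs
    have h1 : (s-t)^2 < δ/A := by rw [lt_div_iff₀ hA]; linarith [hs]
    calc |s - t| = Real.sqrt ((s-t)^2) := (Real.sqrt_sq_eq_abs _).symm
      _ < Real.sqrt (δ/A) := Real.sqrt_lt_sqrt (sq_nonneg _) h1
  set r := -b/(2*A) with hrdef
  set e := C - b^2/(4*A) with hedef
  have hid : ∀ s : ℝ, A*s^2 + b*s + C = A*(s-r)^2 + e := by
    intro s
    rw [hrdef, hedef]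
    field_simp
    ring
  rcases le_or_gt 0 e with he | he
  · refine ⟨r, r, fun s hs => Or.inl ?_⟩
    rw [hid s] at hs
    have h0 : A*(s-r)^2 + e ≥ 0 := by positivity
    rw [abs_of_nonneg h0] at hs
    exact habs r s (by linarith)
  · set h := Real.sqrt (-e/A) with hh
    have hh2 : A * h^2 = -e := by
      rw [hh, Real.sq_sqrt (le_of_lt (div_pos (neg_pos.mpr he) hA))]
      field_simp
    refine ⟨r + h, r - h, fun s hs => ?_⟩
    rw [hid s] at hs
    have hfac : A*(s-r)^2 + e = A * ((s - (r+h)) * (s - (r-h))) := by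
      have he2 : e = -(A*h^2) := by linarith
      rw [he2]; ring
    rw [hfac, abs_mul, abs_of_pos hA, abs_mul] at hs
    rcases le_total |s - (r+h)| |s - (r-h)| with hle | hle
    · left
      apply habs
      calc A * (s - (r+h))^2 = A * (|s - (r+h)| * |s - (r+h)|) := by
            rw [← sq_abs, sq]
        _ ≤ A * (|s - (r+h)| * |s - (r-h)|) := by
            exact mul_le_mul_of_nonneg_left
              (mul_le_mul_of_nonneg_left hle (abs_nonneg _)) hA.le
        _ < δ := hs
    · right
      apply habs
      calc A * (s - (r-h))^2 = A * (|s - (r-h)| * |s - (r-h)|) := by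
            rw [← sq_abs, sq]
        _ ≤ A * (|s - (r+h)| * |s - (r-h)|) := by
            exact mul_le_mul_of_nonneg_left
              (mul_le_mul_of_nonneg_right hle (abs_nonneg _)) hA.le
        _ < δ := hs

lemma vol_small {S : Set ℝ} {d : ℝ} (h : ∀ x ∈ S, ∀ y ∈ S, |x - y| ≤ d) :
    volume S ≤ ENNReal.ofReal (2*d) := by
  rcases S.eq_empty_or_nonempty with rfl | ⟨x₀, hx₀⟩
  · simp
  · have hsub : S ⊆ Icc (x₀ - d) (x₀ + d) := by
      intro y hy
      have hxy := h y hy x₀ hx₀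
      rw [abs_le] at hxy
      constructor <;> [linarith [hxy.2]; linarith [hxy.1]]
    calc volume S ≤ volume (Icc (x₀ - d) (x₀ + d)) := measure_mono hsub
      _ = ENNReal.ofReal (2*d) := by rw [Real.volume_Icc]; ring_nf

lemma a_le_rpow34 {a β : ℝ} (ha : 0 < a) (ha1 : a ≤ 1) (hab : a ≤ β) :
    a ≤ β ^ ((3:ℝ)/4) := by
  calc a = a^(1:ℝ) := (Real.rpow_one a).symm
    _ ≤ a^((3:ℝ)/4) := Real.rpow_le_rpow_of_exponent_ge ha ha1 (by norm_num)
    _ ≤ β^((3:ℝ)/4) := Real.rpow_le_rpow ha.le hab (by norm_num)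

lemma quarter_bound {x y : ℝ} (hx : 0 ≤ x) (hy : 0 ≤ y) (h1 : 1 ≤ x + y) :
    (1+x)*(1+y)/4 ≤ (x+y)^2 := by
  nlinarith [mul_nonneg hx hy, sq_nonneg (x+y-1)]

lemma sqrt_le_one' {x : ℝ} (h : x ≤ 1) : Real.sqrt x ≤ 1 := by
  calc Real.sqrt x ≤ Real.sqrt 1 := Real.sqrt_le_sqrt h
    _ = 1 := Real.sqrt_one

lemma sqdiff {s₁ s₂ r ρ : ℝ} (h10 : 0 ≤ s₁) (h20 : 0 ≤ s₂) (h11 : s₁ ≤ 1) (h21 : s₂ ≤ 1)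
    (hd1 : |s₁ - r| < ρ) (hd2 : |s₂ - r| < ρ) : |s₁^2 - s₂^2| ≤ 4*ρ := by
  obtain ⟨a1, b1⟩ := abs_lt.mp hd1
  obtain ⟨a2, b2⟩ := abs_lt.mp hd2
  have hρ0 : 0 ≤ ρ := by linarith
  rw [abs_le]
  constructor <;>
    nlinarith [mul_nonneg (show (0:ℝ) ≤ 2*ρ - (s₂-s₁) by linarith)
        (show (0:ℝ) ≤ s₁+s₂ by linarith),
      mul_nonneg (show (0:ℝ) ≤ 2*ρ - (s₁-s₂) by linarith)
        (show (0:ℝ) ≤ s₁+s₂ by linarith),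
      mul_nonneg (show (0:ℝ) ≤ 2 - (s₁+s₂) by linarith) hρ0]

set_option maxHeartbeats 1600000 in
lemma perk (υ : ℝ) (hυ : υ > 6) (a : ℝ) (ha : 0 < a) (ha27 : a < 1/27)
    (c : ℝ) (hc : 0 < c) (hca : c ≤ a) (k0 k1 k2 : ℤ) :
    volume {β : ℝ | β ∈ Ico a (1/27) ∧ ¬(k0 = 0 ∧ k1 = 0 ∧ k2 = 0) ∧
      |(k0 : ℝ) * (β ^ ((3:ℝ)/4))
        - (k1 : ℝ) * (Real.sqrt ((1 - Real.sqrt (1 - 27*β)) / 2) * β ^ ((3:ℝ)/4))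
        + (k2 : ℝ) * (Real.sqrt ((1 + Real.sqrt (1 - 27*β)) / 2) * β ^ ((3:ℝ)/4))|
        < c / ((|k0| + |k1| + |k2| : ℤ) : ℝ) ^ υ}
      ≤ ENNReal.ofReal (Real.sqrt (c/a) * (256 * (sw k0 * sw k1 * sw k2))) := by
  have ha1 : a ≤ 1 := by linarith
  by_cases h12 : k1 = 0 ∧ k2 = 0
  · -- degenerate case: the set is empty
    obtain ⟨rfl, rfl⟩ := h12
    have hempty : {β : ℝ | β ∈ Ico a (1/27) ∧ ¬(k0 = 0 ∧ (0:ℤ) = 0 ∧ (0:ℤ) = 0) ∧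
      |(k0 : ℝ) * (β ^ ((3:ℝ)/4))
        - ((0:ℤ) : ℝ) * (Real.sqrt ((1 - Real.sqrt (1 - 27*β)) / 2) * β ^ ((3:ℝ)/4))
        + ((0:ℤ) : ℝ) * (Real.sqrt ((1 + Real.sqrt (1 - 27*β)) / 2) * β ^ ((3:ℝ)/4))|
        < c / ((|k0| + |(0:ℤ)| + |(0:ℤ)| : ℤ) : ℝ) ^ υ} = ∅ := by
      apply eq_empty_iff_forall_notMem.mpr
      rintro β ⟨⟨hβa, hβ27⟩, hne, habs⟩
      have hk0 : k0 ≠ 0 := fun h => hne ⟨h, rfl, rfl⟩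
      have hβ0 : 0 < β := lt_of_lt_of_le ha hβa
      have hk01 : (1:ℝ) ≤ |(k0:ℝ)| := by exact_mod_cast Int.one_le_abs hk0
      have hKc : ((|k0| + |(0:ℤ)| + |(0:ℤ)| : ℤ) : ℝ) = |(k0:ℝ)| := by push_cast; simp
      rw [hKc] at habs
      simp only [Int.cast_zero, zero_mul, sub_zero, add_zero] at habs
      have hKυ : (1:ℝ) ≤ |(k0:ℝ)|^υ := by
        calc (1:ℝ) = |(k0:ℝ)|^(0:ℝ) := (Real.rpow_zero _).symm
          _ ≤ |(k0:ℝ)|^υ := Real.rpow_le_rpow_of_exponent_le hk01 (by linarith)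
      have h1 : c / |(k0:ℝ)|^υ ≤ c := div_le_self hc.le hKυ
      have h2 : a ≤ β^((3:ℝ)/4) := a_le_rpow34 ha ha1 hβa
      rw [abs_mul, abs_of_nonneg (Real.rpow_nonneg hβ0.le _)] at habs
      have h3 : β^((3:ℝ)/4) ≤ |(k0:ℝ)| * β^((3:ℝ)/4) :=
        le_mul_of_one_le_left (Real.rpow_nonneg hβ0.le _) hk01
      linarith
    rw [hempty, measure_empty]
    exact zero_le
  · -- main case
    have hk12 : (1:ℤ) ≤ |k1| + |k2| := by
      rcases not_and_or.mp h12 with h | h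
      · have := Int.one_le_abs h; have := abs_nonneg k2; linarith
      · have := Int.one_le_abs h; have := abs_nonneg k1; linarith
    set q : ℝ := |(k1:ℝ)| + |(k2:ℝ)| with hqdef
    have hq1 : (1:ℝ) ≤ q := by
      rw [hqdef]; push_cast [← Int.cast_abs]; exact_mod_cast hk12
    have hq0 : (0:ℝ) < q := by linarith
    set K : ℝ := |(k0:ℝ)| + |(k1:ℝ)| + |(k2:ℝ)| with hKdef
    have hKq : K = |(k0:ℝ)| + q := by rw [hKdef, hqdef]; ring
    have hK1 : (1:ℝ) ≤ K := by rw [hKq]; have := abs_nonneg (k0:ℝ); linarith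
    have hK0 : (0:ℝ) < K := by linarith
    have hKeq : ((|k0| + |k1| + |k2| : ℤ) : ℝ) = K := by rw [hKdef]; push_cast; ring
    set p : ℝ := (k1:ℝ)^2 + (k2:ℝ)^2 with hpdef
    have hpq : q^2 ≤ 2*p := by
      rw [hqdef, hpdef]
      nlinarith [sq_nonneg (|(k1:ℝ)| - |(k2:ℝ)|), sq_abs (k1:ℝ), sq_abs (k2:ℝ)]
    set V : ℝ := p/2 with hVdef
    have hq2' : (1:ℝ) ≤ q^2 := by nlinarith [hq1]
    have hp0 : (0:ℝ) < p := by linarith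
    have hV0 : (0:ℝ) < V := by rw [hVdef]; linarith
    set U : ℝ := (k0:ℝ)^2 + ((k2:ℝ)^2 - (k1:ℝ)^2)/2 with hUdef
    set W2 : ℝ := 2*(k0:ℝ)^2*(k2:ℝ)^2 with hW2def
    clear_value q K p V U W2
    have hA : (0:ℝ) < V^2 := by positivity
    have hKυ : (0:ℝ) < K^υ := Real.rpow_pos_of_pos hK0 _
    set δ : ℝ := (c / K^υ / a) * (K*(K*K)) with hδdef
    clear_value δ
    have hδ0 : (0:ℝ) < δ := by
      rw [hδdef]; positivity
    have hδalt : δ = (c/a) * K^((3:ℝ)-υ) := by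
      rw [hδdef, show (3:ℝ)-υ = -υ+3 by ring, Real.rpow_add hK0, Real.rpow_neg hK0.le,
        show K^((3:ℝ)) = K^(3:ℕ) by rw [← Real.rpow_natCast K 3]; norm_num]
      field_simp
    obtain ⟨r₁, r₂, hr⟩ := quad_sublevel (V^2) (2*U*V - W2) (U^2 - W2) δ hA
    set ρ : ℝ := Real.sqrt (δ / V^2) with hρdef
    have hρ0 : 0 ≤ ρ := Real.sqrt_nonneg _
    clear_value ρ
    -- inclusion into two thin sets
    have hsub : {β : ℝ | β ∈ Ico a (1/27) ∧ ¬(k0 = 0 ∧ k1 = 0 ∧ k2 = 0) ∧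
      |(k0 : ℝ) * (β ^ ((3:ℝ)/4))
        - (k1 : ℝ) * (Real.sqrt ((1 - Real.sqrt (1 - 27*β)) / 2) * β ^ ((3:ℝ)/4))
        + (k2 : ℝ) * (Real.sqrt ((1 + Real.sqrt (1 - 27*β)) / 2) * β ^ ((3:ℝ)/4))|
        < c / ((|k0| + |k1| + |k2| : ℤ) : ℝ) ^ υ} ⊆
        {β : ℝ | β ∈ Ico a (1/27) ∧ |Real.sqrt (1 - 27*β) - r₁| < ρ} ∪
        {β : ℝ | β ∈ Ico a (1/27) ∧ |Real.sqrt (1 - 27*β) - r₂| < ρ} := by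
      rintro β ⟨hβI, -, habs⟩
      obtain ⟨hβa, hβ27⟩ := hβI
      have hβ0 : 0 < β := lt_of_lt_of_le ha hβa
      rw [hKeq] at habs
      set s : ℝ := Real.sqrt (1 - 27*β) with hs
      have h27 : (0:ℝ) ≤ 1 - 27*β := by linarith
      have hs0 : 0 ≤ s := Real.sqrt_nonneg _
      have hss : s^2 = 1 - 27*β := Real.sq_sqrt h27
      clear_value s
      have hs1 : s ≤ 1 := by rw [hs]; exact sqrt_le_one' (by linarith)
      set μ1 : ℝ := Real.sqrt ((1 - s)/2) with hμ1
      set μ2 : ℝ := Real.sqrt ((1 + s)/2) with hμ2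
      have hμ1sq : μ1^2 = (1-s)/2 := Real.sq_sqrt (by linarith)
      have hμ2sq : μ2^2 = (1+s)/2 := Real.sq_sqrt (by linarith)
      have hμ10 : 0 ≤ μ1 := Real.sqrt_nonneg _
      have hμ20 : 0 ≤ μ2 := Real.sqrt_nonneg _
      have hμ11 : μ1 ≤ 1 := by rw [hμ1]; exact sqrt_le_one' (by linarith)
      have hμ21 : μ2 ≤ 1 := by rw [hμ2]; exact sqrt_le_one' (by linarith)
      clear_value μ1 μ2
      have hBpos : 0 < β ^ ((3:ℝ)/4) := Real.rpow_pos_of_pos hβ0 _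
      have hFeq : (k0:ℝ) * (β^((3:ℝ)/4)) - (k1:ℝ)*(μ1 * β^((3:ℝ)/4)) + (k2:ℝ)*(μ2*β^((3:ℝ)/4))
          = ((k0:ℝ) - k1*μ1 + k2*μ2) * β^((3:ℝ)/4) := by ring
      rw [hFeq, abs_mul, abs_of_pos hBpos] at habs
      -- bound |g|
      have hBa : a ≤ β^((3:ℝ)/4) := a_le_rpow34 ha ha1 hβa
      have hgabs : |(k0:ℝ) - k1*μ1 + k2*μ2| < c / K^υ / a := by
        rw [lt_div_iff₀ ha]
        calc |(k0:ℝ) - k1*μ1 + k2*μ2| * a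
            ≤ |(k0:ℝ) - k1*μ1 + k2*μ2| * β^((3:ℝ)/4) :=
              mul_le_mul_of_nonneg_left hBa (abs_nonneg _)
          _ < c / K^υ := habs
      -- bound each conjugate factor by K
      have hb : ∀ x y : ℝ, |x| ≤ 1 → |y| ≤ 1 → |(k0:ℝ) + k1*x + k2*y| ≤ K := by
        intro x y hx hy
        calc |(k0:ℝ) + (k1:ℝ)*x + (k2:ℝ)*y| ≤ |(k0:ℝ)| + |(k1:ℝ)*x| + |(k2:ℝ)*y| :=
              abs_add_three _ _ _
          _ ≤ K := by
              rw [abs_mul, abs_mul, hKdef]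
              have h1 : |(k1:ℝ)| * |x| ≤ |(k1:ℝ)| :=
                mul_le_of_le_one_right (abs_nonneg _) hx
              have h2 : |(k2:ℝ)| * |y| ≤ |(k2:ℝ)| :=
                mul_le_of_le_one_right (abs_nonneg _) hy
              linarith
      have hμ1a : |μ1| ≤ 1 := by rw [abs_of_nonneg hμ10]; exact hμ11
      have hμ2a : |μ2| ≤ 1 := by rw [abs_of_nonneg hμ20]; exact hμ21
      have hμ1a' : |(-μ1)| ≤ 1 := by rwa [abs_neg]
      have hμ2a' : |(-μ2)| ≤ 1 := by rwa [abs_neg]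
      have hf1 : |(k0:ℝ) + k1*μ1 + k2*μ2| ≤ K := hb _ _ hμ1a hμ2a
      have hf2 : |(k0:ℝ) + k1*μ1 - k2*μ2| ≤ K := by
        rw [show (k0:ℝ) + k1*μ1 - k2*μ2 = (k0:ℝ) + k1*μ1 + k2*(-μ2) by ring]
        exact hb _ _ hμ1a hμ2a'
      have hf3 : |(k0:ℝ) - k1*μ1 - k2*μ2| ≤ K := by
        rw [show (k0:ℝ) - k1*μ1 - k2*μ2 = (k0:ℝ) + k1*(-μ1) + k2*(-μ2) by ring]
        exact hb _ _ hμ1a' hμ2a'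
      -- algebraic identity
      have key0 : ((k0:ℝ) - k1*μ1 + k2*μ2) * (((k0:ℝ) + k1*μ1 + k2*μ2) *
            (((k0:ℝ) + k1*μ1 - k2*μ2) * ((k0:ℝ) - k1*μ1 - k2*μ2)))
          = ((k0:ℝ)^2 + (k2:ℝ)^2*μ2^2 - (k1:ℝ)^2*μ1^2)^2 - 4*(k0:ℝ)^2*(k2:ℝ)^2*μ2^2 := by
        ring
      rw [hμ1sq, hμ2sq] at key0
      have key : V^2*s^2 + (2*U*V - W2)*s + (U^2 - W2)
          = ((k0:ℝ) - k1*μ1 + k2*μ2) * (((k0:ℝ) + k1*μ1 + k2*μ2) *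
            (((k0:ℝ) + k1*μ1 - k2*μ2) * ((k0:ℝ) - k1*μ1 - k2*μ2))) := by
        rw [key0, hVdef, hUdef, hW2def, hpdef]
        ring
      -- quadratic small
      have hquad : |V^2*s^2 + (2*U*V - W2)*s + (U^2 - W2)| < δ := by
        rw [key, abs_mul, abs_mul, abs_mul]
        have hKK : |(k0:ℝ) + k1*μ1 + k2*μ2| * (|(k0:ℝ) + k1*μ1 - k2*μ2| * |(k0:ℝ) - k1*μ1 - k2*μ2|)
            ≤ K*(K*K) := by
          have h0 : (0:ℝ) ≤ K := hK0.le
          have := mul_le_mul hf2 hf3 (abs_nonneg _) h0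
          have h2 := mul_le_mul hf1 this (mul_nonneg (abs_nonneg _) (abs_nonneg _)) h0
          exact h2
        calc |(k0:ℝ) - k1*μ1 + k2*μ2| * (|(k0:ℝ) + k1*μ1 + k2*μ2| *
              (|(k0:ℝ) + k1*μ1 - k2*μ2| * |(k0:ℝ) - k1*μ1 - k2*μ2|))
            ≤ |(k0:ℝ) - k1*μ1 + k2*μ2| * (K*(K*K)) :=
              mul_le_mul_of_nonneg_left hKK (abs_nonneg _)
          _ < (c / K^υ / a) * (K*(K*K)) := by
              apply mul_lt_mul_of_pos_right hgabs
              positivity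
          _ = δ := by rw [hδdef]
      rcases hr s hquad with h | h
      · left; exact ⟨⟨hβa, hβ27⟩, by rw [← hs]; exact h⟩
      · right; exact ⟨⟨hβa, hβ27⟩, by rw [← hs]; exact h⟩
    -- volume of the thin sets
    have hthin : ∀ r : ℝ, volume {β : ℝ | β ∈ Ico a (1/27) ∧ |Real.sqrt (1 - 27*β) - r| < ρ}
        ≤ ENNReal.ofReal (2*((4/27)*ρ)) := by
      intro r
      apply vol_small
      rintro β₁ ⟨⟨ha1', h27_1⟩, hd1⟩ β₂ ⟨⟨ha2', h27_2⟩, hd2⟩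
      have hb10 : 0 < β₁ := lt_of_lt_of_le ha ha1'
      have hb20 : 0 < β₂ := lt_of_lt_of_le ha ha2'
      set s₁ : ℝ := Real.sqrt (1 - 27*β₁) with hs1def
      set s₂ : ℝ := Real.sqrt (1 - 27*β₂) with hs2def
      have hss1 : s₁^2 = 1 - 27*β₁ := Real.sq_sqrt (by linarith)
      have hss2 : s₂^2 = 1 - 27*β₂ := Real.sq_sqrt (by linarith)
      have hs10 : 0 ≤ s₁ := Real.sqrt_nonneg _
      have hs20 : 0 ≤ s₂ := Real.sqrt_nonneg _
      have hs11 : s₁ ≤ 1 := by rw [hs1def]; exact sqrt_le_one' (by linarith)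
      have hs21 : s₂ ≤ 1 := by rw [hs2def]; exact sqrt_le_one' (by linarith)
      clear_value s₁ s₂
      have hkey := sqdiff hs10 hs20 hs11 hs21 hd1 hd2
      obtain ⟨hk1, hk2⟩ := abs_le.mp hkey
      rw [abs_le]
      constructor <;> linarith
    -- put everything together
    refine le_trans (measure_mono hsub) (le_trans (measure_union_le _ _) ?_)
    have hρbound : ρ ≤ Real.sqrt (c/a) * (128 * (sw k0 * sw k1 * sw k2)) := by
      have e1 : ρ = Real.sqrt δ / V := by
        rw [hρdef, Real.sqrt_div hδ0.le, Real.sqrt_sq hV0.le]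
      have e2 : Real.sqrt δ = Real.sqrt (c/a) * Real.sqrt (K^((3:ℝ)-υ)) := by
        rw [hδalt, Real.sqrt_mul (by positivity)]
      have e3sq : (K^(((3:ℝ)-υ)/2))^(2:ℕ) = K^((3:ℝ)-υ) := by
        rw [← Real.rpow_natCast (K ^ (((3:ℝ)-υ)/2)) 2, ← Real.rpow_mul hK0.le]
        norm_num
      have e3 : Real.sqrt (K^((3:ℝ)-υ)) = K^(((3:ℝ)-υ)/2) := by
        rw [← e3sq, Real.sqrt_sq (Real.rpow_nonneg hK0.le _)]
      have e4 : ρ = Real.sqrt (c/a) * (K^(((3:ℝ)-υ)/2) / V) := by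
        rw [e1, e2, e3]; ring
      have hxy1 : (1:ℝ) ≤ |(k1:ℝ)| + |(k2:ℝ)| := by rw [← hqdef]; exact hq1
      have hk1nn : (0:ℝ) ≤ |(k1:ℝ)| := abs_nonneg _
      have hk2nn : (0:ℝ) ≤ |(k2:ℝ)| := abs_nonneg _
      have hq2R : q^(2:ℕ) = q^((2:ℝ)) := (Real.rpow_two q).symm
      -- split K^e
      have hsplit : K^(((3:ℝ)-υ)/2) = K^(-(9/8):ℝ) * K^(((3:ℝ)-υ)/2 + 9/8) := by
        rw [← Real.rpow_add hK0]
        congr 1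
        ring
      have hb1 : K^(-(9/8):ℝ) ≤ (1+|(k0:ℝ)|)^(-(9/8):ℝ) :=
        Real.rpow_le_rpow_of_nonpos (by positivity)
          (by rw [hKq]; linarith) (by norm_num)
      have he0 : ((3:ℝ)-υ)/2 + 9/8 ≤ 0 := by linarith
      have hb2 : K^(((3:ℝ)-υ)/2 + 9/8) ≤ q^(((3:ℝ)-υ)/2 + 9/8) :=
        Real.rpow_le_rpow_of_nonpos hq0
          (by rw [hKq]; linarith [abs_nonneg (k0:ℝ)]) he0
      have hb3 : q^(((3:ℝ)-υ)/2 + 9/8) ≤ q^(-(3/8):ℝ) :=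
        Real.rpow_le_rpow_of_exponent_le hq1 (by linarith)
      have hKe : K^(((3:ℝ)-υ)/2) ≤ sw k0 * q^(-(3/8):ℝ) := by
        rw [hsplit]
        exact mul_le_mul hb1 (hb2.trans hb3) (Real.rpow_nonneg hK0.le _)
          (Real.rpow_nonneg (by positivity) _)
      have hVq : q^(2:ℕ)/4 ≤ V := by rw [hVdef]; linarith [hpq]
      have hdivV : (1:ℝ)/V ≤ 4/q^(2:ℕ) := by
        rw [div_le_div_iff₀ hV0 (by positivity)]
        linarith [hVq]
      have hstep1 : K^(((3:ℝ)-υ)/2) / V ≤ (sw k0 * q^(-(3/8):ℝ)) * (4/q^(2:ℕ)) := by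
        rw [div_eq_mul_one_div]
        exact mul_le_mul hKe hdivV (by positivity)
          (mul_nonneg (sw_pos k0).le (Real.rpow_nonneg hq0.le _))
      have hq19 : q^(-(3/8):ℝ) * (4/q^(2:ℕ)) = 4 * q^(-(19/8):ℝ) := by
        have h' : q^(-(3/8):ℝ) / q^((2:ℝ)) = q^(-(19/8):ℝ) := by
          rw [← Real.rpow_sub hq0]; norm_num
        calc q^(-(3/8):ℝ) * (4/q^(2:ℕ)) = 4 * (q^(-(3/8):ℝ)/q^((2:ℝ))) := by
              rw [← hq2R]; ring
          _ = 4 * q^(-(19/8):ℝ) := by rw [h']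
      -- two-variable bound
      have hq4 : (1+|(k1:ℝ)|)*(1+|(k2:ℝ)|)/4 ≤ q^((2:ℝ)) := by
        rw [← hq2R, hqdef]
        exact quarter_bound hk1nn hk2nn hxy1
      have h216 : (q^((2:ℝ)))^(-(19/16):ℝ) = q^(-(19/8):ℝ) := by
        rw [← Real.rpow_mul hq0.le]; norm_num
      have h217 : (q^((2:ℝ)))^(-(19/16):ℝ) ≤ ((1+|(k1:ℝ)|)*(1+|(k2:ℝ)|)/4)^(-(19/16):ℝ) :=
        Real.rpow_le_rpow_of_nonpos (by positivity) hq4 (by norm_num)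
      have h218 : ((1+|(k1:ℝ)|)*(1+|(k2:ℝ)|)/4)^(-(19/16):ℝ)
          = ((1+|(k1:ℝ)|)*(1+|(k2:ℝ)|))^(-(19/16):ℝ) * (4:ℝ)^((19/16):ℝ) := by
        rw [Real.div_rpow (by positivity) (by norm_num : (0:ℝ) ≤ 4),
          Real.rpow_neg (by norm_num : (0:ℝ) ≤ 4) ((19:ℝ)/16)]
        field_simp
      have h4b : ((4:ℝ))^((19/16):ℝ) ≤ 8 := by
        have h23 : ((2:ℝ))^((3:ℝ)) = 8 := by
          rw [show (3:ℝ) = ((3:ℕ):ℝ) by norm_num, Real.rpow_natCast]; norm_num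
        have h22 : ((2:ℝ))^((2:ℝ)) = 4 := by rw [Real.rpow_two]; norm_num
        calc (4:ℝ)^((19/16):ℝ) ≤ (4:ℝ)^((3/2):ℝ) :=
              Real.rpow_le_rpow_of_exponent_le (by norm_num) (by norm_num)
          _ = 8 := by
              rw [← h22, ← Real.rpow_mul (by norm_num : (0:ℝ) ≤ 2)]
              rw [show ((2:ℝ)*(3/2)) = (3:ℝ) by norm_num]
              exact h23
      have hmul2 : ((1+|(k1:ℝ)|)*(1+|(k2:ℝ)|))^(-(19/16):ℝ)
          = (1+|(k1:ℝ)|)^(-(19/16):ℝ) * (1+|(k2:ℝ)|)^(-(19/16):ℝ) :=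
        Real.mul_rpow (by positivity) (by positivity)
      have hcF : q^(-(19/8):ℝ) ≤ 8 * ((1+|(k1:ℝ)|)^(-(19/16):ℝ) * (1+|(k2:ℝ)|)^(-(19/16):ℝ)) := by
        calc q^(-(19/8):ℝ) = (q^((2:ℝ)))^(-(19/16):ℝ) := h216.symm
          _ ≤ ((1+|(k1:ℝ)|)*(1+|(k2:ℝ)|)/4)^(-(19/16):ℝ) := h217
          _ = ((1+|(k1:ℝ)|)*(1+|(k2:ℝ)|))^(-(19/16):ℝ) * (4:ℝ)^((19/16):ℝ) := h218
          _ ≤ ((1+|(k1:ℝ)|)*(1+|(k2:ℝ)|))^(-(19/16):ℝ) * 8 :=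
              mul_le_mul_of_nonneg_left h4b (Real.rpow_nonneg (by positivity) _)
          _ = 8 * ((1+|(k1:ℝ)|)^(-(19/16):ℝ) * (1+|(k2:ℝ)|)^(-(19/16):ℝ)) := by
              rw [hmul2]; ring
      have hc61 : (1+|(k1:ℝ)|)^(-(19/16):ℝ) ≤ sw k1 :=
        Real.rpow_le_rpow_of_exponent_le (by linarith) (by norm_num)
      have hc62 : (1+|(k2:ℝ)|)^(-(19/16):ℝ) ≤ sw k2 :=
        Real.rpow_le_rpow_of_exponent_le (by linarith) (by norm_num)
      have hcore : K^(((3:ℝ)-υ)/2) / V ≤ 128 * (sw k0 * sw k1 * sw k2) := by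
        have hswnn : (0:ℝ) ≤ sw k0 * sw k1 * sw k2 :=
          (mul_pos (mul_pos (sw_pos k0) (sw_pos k1)) (sw_pos k2)).le
        calc K^(((3:ℝ)-υ)/2) / V ≤ (sw k0 * q^(-(3/8):ℝ)) * (4/q^(2:ℕ)) := hstep1
          _ = sw k0 * (q^(-(3/8):ℝ) * (4/q^(2:ℕ))) := by ring
          _ = sw k0 * (4 * q^(-(19/8):ℝ)) := by rw [hq19]
          _ ≤ sw k0 * (4 * (8 * ((1+|(k1:ℝ)|)^(-(19/16):ℝ) * (1+|(k2:ℝ)|)^(-(19/16):ℝ)))) := by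
              apply mul_le_mul_of_nonneg_left _ (sw_pos k0).le
              exact mul_le_mul_of_nonneg_left hcF (by norm_num)
          _ ≤ sw k0 * (4 * (8 * (sw k1 * sw k2))) := by
              apply mul_le_mul_of_nonneg_left _ (sw_pos k0).le
              apply mul_le_mul_of_nonneg_left _ (by norm_num : (0:ℝ) ≤ 4)
              apply mul_le_mul_of_nonneg_left _ (by norm_num : (0:ℝ) ≤ 8)
              exact mul_le_mul hc61 hc62 (Real.rpow_nonneg (by positivity) _) (sw_pos k1).le
          _ = 32 * (sw k0 * sw k1 * sw k2) := by ring
          _ ≤ 128 * (sw k0 * sw k1 * sw k2) := by linarith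
      rw [e4]
      exact mul_le_mul_of_nonneg_left hcore (Real.sqrt_nonneg _)
    calc volume {β : ℝ | β ∈ Ico a (1/27) ∧ |Real.sqrt (1 - 27*β) - r₁| < ρ}
          + volume {β : ℝ | β ∈ Ico a (1/27) ∧ |Real.sqrt (1 - 27*β) - r₂| < ρ}
        ≤ ENNReal.ofReal (2*((4/27)*ρ)) + ENNReal.ofReal (2*((4/27)*ρ)) :=
          add_le_add (hthin r₁) (hthin r₂)
      _ = ENNReal.ofReal ((16/27)*ρ) := by
          rw [← ENNReal.ofReal_add (by positivity) (by positivity)]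
          ring_nf
      _ ≤ ENNReal.ofReal (Real.sqrt (c/a) * (256 * (sw k0 * sw k1 * sw k2))) := by
          apply ENNReal.ofReal_le_ofReal
          have hsw : 0 < sw k0 * sw k1 * sw k2 :=
            mul_pos (mul_pos (sw_pos k0) (sw_pos k1)) (sw_pos k2)
          have hsq : 0 ≤ Real.sqrt (c/a) := Real.sqrt_nonneg _
          nlinarith [mul_nonneg hsq hsw.le]


theorem stmt_11 (υ : ℝ) (hυ : υ > 6) :
    MeasureTheory.volume
      (Set.Ioo (0:ℝ) (1/27) \
        {β : ℝ | ∃ c > (0:ℝ), ∀ k0 k1 k2 : ℤ, ¬(k0 = 0 ∧ k1 = 0 ∧ k2 = 0) →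
          |(k0 : ℝ) * (β ^ ((3:ℝ)/4))
            - (k1 : ℝ) * (Real.sqrt ((1 - Real.sqrt (1 - 27*β)) / 2) * β ^ ((3:ℝ)/4))
            + (k2 : ℝ) * (Real.sqrt ((1 + Real.sqrt (1 - 27*β)) / 2) * β ^ ((3:ℝ)/4))|
            ≥ c / ((|k0| + |k1| + |k2| : ℤ) : ℝ) ^ υ}) = 0 := by
  set G : Set ℝ := {β : ℝ | ∃ c > (0:ℝ), ∀ k0 k1 k2 : ℤ, ¬(k0 = 0 ∧ k1 = 0 ∧ k2 = 0) →
          |(k0 : ℝ) * (β ^ ((3:ℝ)/4))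
            - (k1 : ℝ) * (Real.sqrt ((1 - Real.sqrt (1 - 27*β)) / 2) * β ^ ((3:ℝ)/4))
            + (k2 : ℝ) * (Real.sqrt ((1 + Real.sqrt (1 - 27*β)) / 2) * β ^ ((3:ℝ)/4))|
            ≥ c / ((|k0| + |k1| + |k2| : ℤ) : ℝ) ^ υ} with hGdef
  have key : ∀ a : ℝ, 0 < a → a < 1/27 →
      volume ((Ioo (0:ℝ) (1/27) \ G) ∩ Ico a (1/27)) = 0 := by
    intro a ha ha27
    -- covering by resonance sets
    have cover : ∀ n : ℕ, (Ioo (0:ℝ) (1/27) \ G) ∩ Ico a (1/27) ⊆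
        ⋃ (k : ℤ×ℤ×ℤ), {β : ℝ | β ∈ Ico a (1/27) ∧ ¬(k.1 = 0 ∧ k.2.1 = 0 ∧ k.2.2 = 0) ∧
          |(k.1 : ℝ) * (β ^ ((3:ℝ)/4))
            - (k.2.1 : ℝ) * (Real.sqrt ((1 - Real.sqrt (1 - 27*β)) / 2) * β ^ ((3:ℝ)/4))
            + (k.2.2 : ℝ) * (Real.sqrt ((1 + Real.sqrt (1 - 27*β)) / 2) * β ^ ((3:ℝ)/4))|
            < (a/((n:ℝ)+1)) / ((|k.1| + |k.2.1| + |k.2.2| : ℤ) : ℝ) ^ υ} := by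
      intro n β hβ
      obtain ⟨⟨hβmem, hβG⟩, hβI⟩ := hβ
      rw [hGdef, mem_setOf_eq] at hβG
      push_neg at hβG
      obtain ⟨k0, k1, k2, hk, hlt⟩ := hβG (a/((n:ℝ)+1)) (by positivity)
      exact mem_iUnion.mpr ⟨(k0, k1, k2), hβI, fun h => hk h.1 h.2.1 h.2.2, hlt⟩
    set T : ℝ≥0∞ := ∑' j : ℤ, ENNReal.ofReal (sw j) with hTdef
    have hT : T ≠ ⊤ := by
      rw [hTdef, ← ENNReal.ofReal_tsum_of_nonneg (fun j => (sw_pos j).le) sw_summable]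
      exact ENNReal.ofReal_ne_top
    have hvol : ∀ n : ℕ, volume ((Ioo (0:ℝ) (1/27) \ G) ∩ Ico a (1/27)) ≤
        ENNReal.ofReal (Real.sqrt ((a/((n:ℝ)+1))/a) * 256) * (T * (T * T)) := by
      intro n
      have hcn0 : 0 < a/((n:ℝ)+1) := by positivity
      have hcna : a/((n:ℝ)+1) ≤ a := by
        rw [div_le_iff₀ (by positivity)]
        nlinarith [ha.le, Nat.cast_nonneg (α := ℝ) n]
      have hfact : ∀ k : ℤ×ℤ×ℤ,
          ENNReal.ofReal (Real.sqrt ((a/((n:ℝ)+1))/a) * (256 * (sw k.1 * sw k.2.1 * sw k.2.2)))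
          = ENNReal.ofReal (Real.sqrt ((a/((n:ℝ)+1))/a) * 256) *
            (ENNReal.ofReal (sw k.1) * (ENNReal.ofReal (sw k.2.1) * ENNReal.ofReal (sw k.2.2))) := by
        intro k
        rw [show Real.sqrt ((a/((n:ℝ)+1))/a) * (256 * (sw k.1 * sw k.2.1 * sw k.2.2))
            = (Real.sqrt ((a/((n:ℝ)+1))/a) * 256) * (sw k.1 * (sw k.2.1 * sw k.2.2)) by ring,
          ENNReal.ofReal_mul (by positivity), ENNReal.ofReal_mul (sw_pos k.1).le,
          ENNReal.ofReal_mul (sw_pos k.2.1).le]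
      calc volume ((Ioo (0:ℝ) (1/27) \ G) ∩ Ico a (1/27))
          ≤ volume (⋃ (k : ℤ×ℤ×ℤ), {β : ℝ | β ∈ Ico a (1/27) ∧ ¬(k.1 = 0 ∧ k.2.1 = 0 ∧ k.2.2 = 0) ∧
              |(k.1 : ℝ) * (β ^ ((3:ℝ)/4))
                - (k.2.1 : ℝ) * (Real.sqrt ((1 - Real.sqrt (1 - 27*β)) / 2) * β ^ ((3:ℝ)/4))
                + (k.2.2 : ℝ) * (Real.sqrt ((1 + Real.sqrt (1 - 27*β)) / 2) * β ^ ((3:ℝ)/4))|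
                < (a/((n:ℝ)+1)) / ((|k.1| + |k.2.1| + |k.2.2| : ℤ) : ℝ) ^ υ}) :=
            measure_mono (cover n)
        _ ≤ ∑' (k : ℤ×ℤ×ℤ), volume {β : ℝ | β ∈ Ico a (1/27) ∧ ¬(k.1 = 0 ∧ k.2.1 = 0 ∧ k.2.2 = 0) ∧
              |(k.1 : ℝ) * (β ^ ((3:ℝ)/4))
                - (k.2.1 : ℝ) * (Real.sqrt ((1 - Real.sqrt (1 - 27*β)) / 2) * β ^ ((3:ℝ)/4))
                + (k.2.2 : ℝ) * (Real.sqrt ((1 + Real.sqrt (1 - 27*β)) / 2) * β ^ ((3:ℝ)/4))|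
                < (a/((n:ℝ)+1)) / ((|k.1| + |k.2.1| + |k.2.2| : ℤ) : ℝ) ^ υ} :=
            measure_iUnion_le _
        _ ≤ ∑' (k : ℤ×ℤ×ℤ), ENNReal.ofReal (Real.sqrt ((a/((n:ℝ)+1))/a) *
              (256 * (sw k.1 * sw k.2.1 * sw k.2.2))) :=
            ENNReal.tsum_le_tsum (fun k => perk υ hυ a ha ha27 _ hcn0 hcna k.1 k.2.1 k.2.2)
        _ = ∑' (k : ℤ×ℤ×ℤ), ENNReal.ofReal (Real.sqrt ((a/((n:ℝ)+1))/a) * 256) *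
              (ENNReal.ofReal (sw k.1) * (ENNReal.ofReal (sw k.2.1) * ENNReal.ofReal (sw k.2.2))) :=
            tsum_congr hfact
        _ = ENNReal.ofReal (Real.sqrt ((a/((n:ℝ)+1))/a) * 256) *
              ∑' (k : ℤ×ℤ×ℤ), (ENNReal.ofReal (sw k.1) * (ENNReal.ofReal (sw k.2.1) * ENNReal.ofReal (sw k.2.2))) :=
            ENNReal.tsum_mul_left
        _ = ENNReal.ofReal (Real.sqrt ((a/((n:ℝ)+1))/a) * 256) * (T * (T * T)) := by
            congr 1
            rw [ENNReal.tsum_prod']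
            calc ∑' (j : ℤ), ∑' (m : ℤ×ℤ), ENNReal.ofReal (sw j) *
                  (ENNReal.ofReal (sw m.1) * ENNReal.ofReal (sw m.2))
                = ∑' (j : ℤ), ENNReal.ofReal (sw j) *
                    ∑' (m : ℤ×ℤ), (ENNReal.ofReal (sw m.1) * ENNReal.ofReal (sw m.2)) := by
                  exact tsum_congr (fun j => ENNReal.tsum_mul_left)
              _ = T * ∑' (m : ℤ×ℤ), (ENNReal.ofReal (sw m.1) * ENNReal.ofReal (sw m.2)) := by
                  rw [hTdef, ENNReal.tsum_mul_right]
              _ = T * (T * T) := by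
                  congr 1
                  rw [ENNReal.tsum_prod']
                  calc ∑' (j : ℤ), ∑' (i : ℤ), ENNReal.ofReal (sw j) * ENNReal.ofReal (sw i)
                      = ∑' (j : ℤ), ENNReal.ofReal (sw j) * ∑' (i : ℤ), ENNReal.ofReal (sw i) :=
                        tsum_congr (fun j => ENNReal.tsum_mul_left)
                    _ = T * T := by rw [hTdef, ENNReal.tsum_mul_right]
    -- tendsto
    have h2 : ∀ n : ℕ, (a/((n:ℝ)+1))/a = 1/((n:ℝ)+1) := by
      intro n
      field_simp
    have h3 : Filter.Tendsto (fun n : ℕ => 1/((n:ℝ)+1)) Filter.atTop (nhds 0) :=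
      tendsto_one_div_add_atTop_nhds_zero_nat
    have h4 := (Real.continuous_sqrt.tendsto 0).comp h3
    rw [Real.sqrt_zero] at h4
    have h5 := h4.mul_const (256:ℝ)
    rw [zero_mul] at h5
    have h1 : Filter.Tendsto (fun n : ℕ => Real.sqrt ((a/((n:ℝ)+1))/a) * 256)
        Filter.atTop (nhds 0) := by
      refine h5.congr fun n => ?_
      rw [Function.comp_apply, h2 n]
    have h6 : Filter.Tendsto (fun n : ℕ => ENNReal.ofReal (Real.sqrt ((a/((n:ℝ)+1))/a) * 256))
        Filter.atTop (nhds 0) := by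
      have := (ENNReal.continuous_ofReal.tendsto 0).comp h1
      rwa [ENNReal.ofReal_zero] at this
    have hTT : T * (T * T) ≠ ⊤ := by
      simp [ENNReal.mul_ne_top, hT]
    have h7 := ENNReal.Tendsto.mul_const h6 (Or.inr hTT)
    rw [zero_mul] at h7
    exact le_antisymm (ge_of_tendsto h7 (Filter.Eventually.of_forall hvol)) zero_le
  have cover2 : Ioo (0:ℝ) (1/27) \ G ⊆
      ⋃ n : ℕ, ((Ioo (0:ℝ) (1/27) \ G) ∩ Ico ((1/27)/((n:ℝ)+2)) (1/27)) := by
    intro β hβ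
    have hβ0 : 0 < β := hβ.1.1
    have hβ27 : β < 1/27 := hβ.1.2
    obtain ⟨n, hn⟩ := exists_nat_ge ((1/27)/β)
    refine mem_iUnion.mpr ⟨n, hβ, ?_, hβ27⟩
    rw [div_le_iff₀ (by positivity)]
    rw [div_le_iff₀ hβ0] at hn
    nlinarith [hβ0.le]
  refine measure_mono_null cover2 (measure_iUnion_null fun n => key _ (by positivity) ?_)
  exact div_lt_self (by norm_num) (by nlinarith [Nat.cast_nonneg (α := ℝ) n])
end

section
/- There exists a constant σ > 0 such that for every δ > 0 and every y ∈ ℝ, the Lebesgue measure of the set {x ∈ [−2π, 2π] : y − δ < sin x < y + δ} does not exceed σ·√δ. -/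
open Real MeasureTheory Set

lemma my_sin_arcsin_le {x : ℝ} (hx : -1 ≤ x) : Real.sin (Real.arcsin x) ≤ x := by
  rcases le_or_gt x 1 with h | h
  · rw [Real.sin_arcsin hx h]
  · rw [Real.arcsin_of_one_le h.le, Real.sin_pi_div_two]; linarith

lemma my_le_sin_arcsin {x : ℝ} (hx : x ≤ 1) : x ≤ Real.sin (Real.arcsin x) := by
  rcases le_or_gt (-1) x with h | h
  · rw [Real.sin_arcsin h hx]
  · rw [Real.arcsin_of_le_neg_one h.le, Real.sin_neg, Real.sin_pi_div_two]; linarith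

lemma my_arcsin_gap {δ : ℝ} (hδ : 0 < δ) (y : ℝ) :
    Real.arcsin (y + δ) - Real.arcsin (y - δ) ≤ π * Real.sqrt δ := by
  have hπ := Real.pi_pos
  have hs : 0 ≤ π * Real.sqrt δ := by positivity
  by_cases h1 : y + δ ≤ -1
  · rw [Real.arcsin_of_le_neg_one h1, Real.arcsin_of_le_neg_one (by linarith)]
    simpa using hs
  by_cases h2 : 1 ≤ y - δ
  · rw [Real.arcsin_of_one_le (by linarith : (1:ℝ) ≤ y + δ), Real.arcsin_of_one_le h2]
    simpa using hs
  push_neg at h1 h2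
  set a := Real.arcsin (y - δ) with ha_def
  set b := Real.arcsin (y + δ) with hb_def
  have hab : a ≤ b := Real.monotone_arcsin (by linarith)
  have ha1 : -(π/2) ≤ a := Real.neg_pi_div_two_le_arcsin _
  have ha2 : a ≤ π/2 := Real.arcsin_le_pi_div_two _
  have hb1 : -(π/2) ≤ b := Real.neg_pi_div_two_le_arcsin _
  have hb2 : b ≤ π/2 := Real.arcsin_le_pi_div_two _
  set d := b - a with hd_def
  have hd0 : 0 ≤ d := by linarith
  have hdpi : d ≤ π := by linarith
  -- upper bound on sin b - sin a
  have hs1 : Real.sin b - Real.sin a ≤ 2 * δ := by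
    have u1 : Real.sin b ≤ y + δ := my_sin_arcsin_le h1.le
    have u2 : y - δ ≤ Real.sin a := my_le_sin_arcsin h2.le
    linarith
  -- lower bound on the factors
  have hsinhalf : d / π ≤ Real.sin (d / 2) := by
    have h := Real.mul_le_sin (x := d/2) (by linarith) (by linarith)
    have e : d / π = 2 / π * (d / 2) := by field_simp
    linarith [h, e]
  have hcosmid : d / π ≤ Real.cos ((b + a) / 2) := by
    have habs : |(b + a) / 2| ≤ π/2 - d/2 := by
      rw [abs_le]
      constructor <;> · rw [hd_def]; linarith
    have h0 : Real.cos ((b+a)/2) = Real.cos (|(b+a)/2|) := (Real.cos_abs _).symm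
    have h3 : Real.cos (π/2 - d/2) ≤ Real.cos (|(b+a)/2|) :=
      Real.cos_le_cos_of_nonneg_of_le_pi (abs_nonneg _) (by linarith) habs
    rw [Real.cos_pi_div_two_sub] at h3
    rw [h0]; linarith [hsinhalf, h3]
  have hdp : 0 ≤ d / π := by positivity
  have hlow : 2 * (d/π) * (d/π) ≤ Real.sin b - Real.sin a := by
    rw [Real.sin_sub_sin]
    have : (b - a) / 2 = d / 2 := by rw [hd_def]
    rw [this]
    have h1' : d/π ≤ Real.sin (d/2) := hsinhalf
    nlinarith [hcosmid, h1', hdp]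
  have hdd : d * d ≤ (π * π) * δ := by
    have hq : (d/π) * (d/π) ≤ δ := by nlinarith
    have he : d * d = ((d/π) * (d/π)) * (π * π) := by field_simp
    rw [he]
    nlinarith [hq, sq_nonneg π]
  have : d ≤ Real.sqrt ((π * π) * δ) := by
    rw [← Real.sqrt_mul_self hd0]
    exact Real.sqrt_le_sqrt hdd
  rwa [Real.sqrt_mul (by positivity), Real.sqrt_mul_self hπ.le] at this

lemma my_central {δ y : ℝ} (z : ℝ) (h1 : -(π/2) ≤ z) (h2 : z ≤ π/2)
    (h3 : y - δ < Real.sin z) (h4 : Real.sin z < y + δ) :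
    Real.arcsin (y - δ) ≤ z ∧ z ≤ Real.arcsin (y + δ) := by
  constructor
  · have := Real.monotone_arcsin h3.le
    rwa [Real.arcsin_sin h1 h2] at this
  · have := Real.monotone_arcsin h4.le
    rwa [Real.arcsin_sin h1 h2] at this

theorem stmt_12 :
    ∃ σ > (0:ℝ), ∀ δ > (0:ℝ), ∀ y : ℝ,
      MeasureTheory.volume
        {x : ℝ | x ∈ Set.Icc (-(2*Real.pi)) (2*Real.pi) ∧
          y - δ < Real.sin x ∧ Real.sin x < y + δ}
        ≤ ENNReal.ofReal (σ * Real.sqrt δ) := by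
  refine ⟨5 * π, by positivity, fun δ hδ y => ?_⟩
  have hπ := Real.pi_pos
  set a := Real.arcsin (y - δ) with ha_def
  set b := Real.arcsin (y + δ) with hb_def
  have hgap : b - a ≤ π * Real.sqrt δ := my_arcsin_gap hδ y
  set I1 := Set.Icc a b
  set I2 := Set.Icc (π - b) (π - a)
  set I3 := Set.Icc (-π - b) (-π - a)
  set I4 := Set.Icc (a - 2*π) (b - 2*π)
  set I5 := Set.Icc (a + 2*π) (b + 2*π)
  have hsub : {x : ℝ | x ∈ Set.Icc (-(2*Real.pi)) (2*Real.pi) ∧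
      y - δ < Real.sin x ∧ Real.sin x < y + δ} ⊆ I1 ∪ I2 ∪ I3 ∪ I4 ∪ I5 := by
    rintro x ⟨⟨hx1, hx2⟩, h3, h4⟩
    rcases le_total x (-(π/2)) with hA | hA
    · rcases le_total x (-(3*π/2)) with hB | hB
      · -- x ∈ [-2π, -3π/2]: z = x + 2π
        have hsin : Real.sin (x + 2*π) = Real.sin x := Real.sin_add_two_pi x
        obtain ⟨g1, g2⟩ := my_central (x + 2*π) (by linarith) (by linarith)
          (by rwa [hsin]) (by rwa [hsin])
        exact Or.inl (Or.inr ⟨by linarith, by linarith⟩)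
      · -- x ∈ [-3π/2, -π/2]: z = -π - x
        have hsin : Real.sin (-π - x) = Real.sin x := by
          rw [show -π - x = -(x + π) by ring, Real.sin_neg, Real.sin_add_pi, neg_neg]
        obtain ⟨g1, g2⟩ := my_central (-π - x) (by linarith) (by linarith)
          (by rwa [hsin]) (by rwa [hsin])
        exact Or.inl (Or.inl (Or.inr ⟨by linarith, by linarith⟩))
    · rcases le_total x (π/2) with hB | hB
      · obtain ⟨g1, g2⟩ := my_central x (by linarith) (by linarith) h3 h4
        exact Or.inl (Or.inl (Or.inl (Or.inl ⟨g1, g2⟩)))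
      · rcases le_total x (3*π/2) with hC | hC
        · -- z = π - x
          have hsin : Real.sin (π - x) = Real.sin x := Real.sin_pi_sub x
          obtain ⟨g1, g2⟩ := my_central (π - x) (by linarith) (by linarith)
            (by rwa [hsin]) (by rwa [hsin])
          exact Or.inl (Or.inl (Or.inl (Or.inr ⟨by linarith, by linarith⟩)))
        · -- z = x - 2π
          have hsin : Real.sin (x - 2*π) = Real.sin x := Real.sin_sub_two_pi x
          obtain ⟨g1, g2⟩ := my_central (x - 2*π) (by linarith) (by linarith)
            (by rwa [hsin]) (by rwa [hsin])
          exact Or.inr ⟨by linarith, by linarith⟩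
  have hc : (0:ℝ) ≤ π * Real.sqrt δ := by positivity
  have hv : ∀ (u v : ℝ), v - u ≤ π * Real.sqrt δ →
      volume (Set.Icc u v) ≤ ENNReal.ofReal (π * Real.sqrt δ) := by
    intro u v huv
    rw [Real.volume_Icc]
    exact ENNReal.ofReal_le_ofReal huv
  have h1 : volume I1 ≤ ENNReal.ofReal (π * Real.sqrt δ) := hv _ _ (by linarith)
  have h2 : volume I2 ≤ ENNReal.ofReal (π * Real.sqrt δ) := hv _ _ (by linarith)
  have h3 : volume I3 ≤ ENNReal.ofReal (π * Real.sqrt δ) := hv _ _ (by linarith)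
  have h4 : volume I4 ≤ ENNReal.ofReal (π * Real.sqrt δ) := hv _ _ (by linarith)
  have h5 : volume I5 ≤ ENNReal.ofReal (π * Real.sqrt δ) := hv _ _ (by linarith)
  calc volume {x : ℝ | x ∈ Set.Icc (-(2*Real.pi)) (2*Real.pi) ∧
        y - δ < Real.sin x ∧ Real.sin x < y + δ}
      ≤ volume (I1 ∪ I2 ∪ I3 ∪ I4 ∪ I5) := measure_mono hsub
    _ ≤ volume (I1 ∪ I2 ∪ I3 ∪ I4) + volume I5 := measure_union_le _ _
    _ ≤ (volume (I1 ∪ I2 ∪ I3) + volume I4) + volume I5 :=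
        by gcongr; exact measure_union_le _ _
    _ ≤ ((volume (I1 ∪ I2) + volume I3) + volume I4) + volume I5 :=
        by gcongr; exact measure_union_le _ _
    _ ≤ (((volume I1 + volume I2) + volume I3) + volume I4) + volume I5 :=
        by gcongr; exact measure_union_le _ _
    _ ≤ (((ENNReal.ofReal (π * Real.sqrt δ) + ENNReal.ofReal (π * Real.sqrt δ))
          + ENNReal.ofReal (π * Real.sqrt δ)) + ENNReal.ofReal (π * Real.sqrt δ))
          + ENNReal.ofReal (π * Real.sqrt δ) := by
        gcongr
    _ = ENNReal.ofReal (5 * π * Real.sqrt δ) := by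
        rw [← ENNReal.ofReal_add hc hc, ← ENNReal.ofReal_add (by positivity) hc,
          ← ENNReal.ofReal_add (by positivity) hc, ← ENNReal.ofReal_add (by positivity) hc]
        ring_nf
end

section
/- Fix integers (k0, k1, k2) with k1² + k2² > 0, and real numbers c ∈ (0,1) and υ > 6. Write |k| = |k0| + |k1| + |k2|. Then the Lebesgue measure of the set of ϑ ∈ (π/4, π/2) satisfying |k0 − k1·cos ϑ + k2·sin ϑ| < c/|k|^υ is at most σ·√c / ((k1² + k2²)^{1/4} · |k|^{υ/2}) for some absolute constant σ > 0. -/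
open Real MeasureTheory Set

lemma key_ineq {c d : ℝ} (hc : -(π/2) ≤ c) (hd : d ≤ π/2) (hcd : c ≤ d) :
    (d - c)^2 ≤ π^2/2 * (Real.sin d - Real.sin c) := by
  have hπ := Real.pi_pos
  have hsub : Real.sin d - Real.sin c = 2 * Real.sin ((d - c)/2) * Real.cos ((d + c)/2) :=
    Real.sin_sub_sin d c
  set h := (d - c)/2 with hh
  set m := (d + c)/2 with hm
  have h0 : 0 ≤ h := by rw [hh]; linarith
  have hhalf : h ≤ π/2 := by rw [hh]; linarith
  have hm1 : |m| ≤ π/2 - h := by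
    rw [abs_le]; constructor <;> (rw [hm, hh] at *) <;> [linarith; linarith]
  have hcosm : Real.sin h ≤ Real.cos m := by
    rw [← Real.cos_abs m, ← Real.cos_pi_div_two_sub h]
    exact Real.cos_le_cos_of_nonneg_of_le_pi (abs_nonneg m) (by linarith) hm1
  have hs : 2/π * h ≤ Real.sin h := Real.mul_le_sin h0 hhalf
  have hh0 : 0 ≤ 2/π * h := by positivity
  have hprod : (2/π*h)*(2/π*h) ≤ Real.sin h * Real.cos m :=
    mul_le_mul hs (le_trans hs hcosm) hh0 (le_trans hh0 hs)
  have hq : (2/π*h)*(2/π*h)*π^2 = 4*h^2 := by field_simp; ring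
  have hdc : (d - c)^2 = 4*h^2 := by rw [hh]; ring
  have := mul_le_mul_of_nonneg_left hprod (sq_nonneg π)
  rw [hsub]
  nlinarith [this]
lemma sublevel_sin (a δ : ℝ) :
    volume {ψ : ℝ | ψ ∈ Icc (-(π/2)) (π/2) ∧ |Real.sin ψ - a| < δ} ≤
      ENNReal.ofReal (π * Real.sqrt δ) := by
  rcases eq_empty_or_nonempty
      {ψ : ℝ | ψ ∈ Icc (-(π/2)) (π/2) ∧ |Real.sin ψ - a| < δ} with hE | ⟨ψ0, hψ00, hψ0⟩
  · rw [hE]; simp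
  have hδ : 0 < δ := lt_of_le_of_lt (abs_nonneg _) hψ0
  have habs := abs_lt.1 hψ0
  have hs1 : -1 ≤ Real.sin ψ0 := Real.neg_one_le_sin ψ0
  have hs2 : Real.sin ψ0 ≤ 1 := Real.sin_le_one ψ0
  set c := Real.arcsin (a - δ) with hcdef
  set d := Real.arcsin (a + δ) with hddef
  have hc : -(π/2) ≤ c := Real.neg_pi_div_two_le_arcsin _
  have hd : d ≤ π/2 := Real.arcsin_le_pi_div_two _
  have hcd : c ≤ d := Real.monotone_arcsin (by linarith)
  have hsub : {ψ : ℝ | ψ ∈ Icc (-(π/2)) (π/2) ∧ |Real.sin ψ - a| < δ} ⊆ Icc c d := by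
    rintro ψ ⟨⟨h1, h2⟩, h3⟩
    have habs3 := abs_lt.1 h3
    have := Real.arcsin_sin h1 h2
    constructor
    · rw [← this]; exact Real.monotone_arcsin (by linarith)
    · rw [← this]; exact Real.monotone_arcsin (by linarith)
  have hsind : Real.sin d ≤ a + δ := by
    rcases le_or_gt (a + δ) 1 with h | h
    · rw [hddef, Real.sin_arcsin (by linarith) h]
    · rw [hddef, Real.arcsin_of_one_le h.le, Real.sin_pi_div_two]; linarith
  have hsinc : a - δ ≤ Real.sin c := by
    rcases le_or_gt (-1) (a - δ) with h | h
    · rw [hcdef, Real.sin_arcsin h (by linarith)]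
    · rw [hcdef, Real.arcsin_of_le_neg_one h.le, Real.sin_neg, Real.sin_pi_div_two]; linarith
  have hkey := key_ineq hc hd hcd
  have hπ := Real.pi_pos
  have hdc2 : (d - c)^2 ≤ π^2 * δ := by nlinarith
  have hdcle : d - c ≤ π * Real.sqrt δ := by
    have h1 : d - c = Real.sqrt ((d - c)^2) := (Real.sqrt_sq (by linarith)).symm
    rw [h1]
    calc Real.sqrt ((d-c)^2) ≤ Real.sqrt (π^2 * δ) := Real.sqrt_le_sqrt hdc2
      _ = π * Real.sqrt δ := by
          rw [Real.sqrt_mul (sq_nonneg π), Real.sqrt_sq hπ.le]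
  calc volume _ ≤ volume (Icc c d) := measure_mono hsub
    _ = ENNReal.ofReal (d - c) := Real.volume_Icc
    _ ≤ ENNReal.ofReal (π * Real.sqrt δ) := ENNReal.ofReal_le_ofReal hdcle
-- Step 2: for u ∈ [-π/2, π/2)
lemma sublevel_sin_interval' (a δ u : ℝ) (hu1 : -(π/2) ≤ u) (hu2 : u < π/2) :
    volume {ψ : ℝ | ψ ∈ Ioo u (u + π/4) ∧ |Real.sin ψ - a| < δ} ≤
      ENNReal.ofReal (π * Real.sqrt δ) + ENNReal.ofReal (π * Real.sqrt δ) := by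
  have hπ := Real.pi_pos
  set T := {ψ : ℝ | ψ ∈ Icc (-(π/2)) (π/2) ∧ |Real.sin ψ - a| < δ} with hT
  have hsub : {ψ : ℝ | ψ ∈ Ioo u (u + π/4) ∧ |Real.sin ψ - a| < δ} ⊆
      T ∪ (fun ψ => π - ψ) ⁻¹' T := by
    rintro ψ ⟨⟨h1, h2⟩, h3⟩
    rcases le_or_gt ψ (π/2) with h | h
    · left; exact ⟨⟨by linarith, h⟩, h3⟩
    · right
      refine ⟨⟨by linarith, by linarith⟩, ?_⟩
      rwa [Real.sin_pi_sub]
  calc volume {ψ : ℝ | ψ ∈ Ioo u (u + π/4) ∧ |Real.sin ψ - a| < δ}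
      ≤ volume (T ∪ (fun ψ => π - ψ) ⁻¹' T) := measure_mono hsub
    _ ≤ volume T + volume ((fun ψ => π - ψ) ⁻¹' T) := measure_union_le _ _
    _ ≤ ENNReal.ofReal (π * Real.sqrt δ) + ENNReal.ofReal (π * Real.sqrt δ) := by
        gcongr
        · exact sublevel_sin a δ
        · have : (fun ψ : ℝ => π - ψ) ⁻¹' T = Neg.neg ⁻¹' ((fun x => x + π) ⁻¹' T) := by
            ext ψ; simp [sub_eq_neg_add, add_comm]
          rw [this, Measure.measure_preimage_neg, measure_preimage_add_right]
          exact sublevel_sin a δ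

lemma sublevel_sin_interval (a δ u : ℝ) :
    volume {ψ : ℝ | ψ ∈ Ioo u (u + π/4) ∧ |Real.sin ψ - a| < δ} ≤
      ENNReal.ofReal (2 * (π * Real.sqrt δ)) := by
  have hπ := Real.pi_pos
  set n : ℤ := ⌊(u + π/2)/π⌋ with hn
  have hn1 : (n : ℝ) ≤ (u + π/2)/π := Int.floor_le _
  have hn2 : (u + π/2)/π < n + 1 := Int.lt_floor_add_one _
  have hu'1 : -(π/2) ≤ u - n * π := by
    have := (le_div_iff₀ hπ).1 hn1
    linarith
  have hu'2 : u - n * π < π/2 := by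
    have := (div_lt_iff₀ hπ).1 hn2
    linarith
  have e2 : ((-1:ℝ)^n) * ((-1:ℝ)^n) = 1 := by
    rcases Int.even_or_odd n with he | ho
    · rw [he.neg_one_zpow]; norm_num
    · rw [ho.neg_one_zpow]; norm_num
  have eabs : |(-1:ℝ)^n| = 1 := by
    rcases Int.even_or_odd n with he | ho
    · rw [he.neg_one_zpow]; norm_num
    · rw [ho.neg_one_zpow]; norm_num
  have hsin : ∀ ψ : ℝ, Real.sin (ψ + -(n*π)) = (-1:ℝ)^n * Real.sin ψ := by
    intro ψ
    have h0 := Real.sin_add_int_mul_pi (ψ + -(n*π)) n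
    have harg : ψ + -((n:ℝ)*π) + (n:ℝ)*π = ψ := by ring
    rw [harg] at h0
    rw [h0, ← mul_assoc, e2, one_mul]
  have hset : {ψ : ℝ | ψ ∈ Ioo u (u + π/4) ∧ |Real.sin ψ - a| < δ} =
      (fun ψ => ψ + -(n * π)) ⁻¹'
        {φ : ℝ | φ ∈ Ioo (u - n*π) ((u - n*π) + π/4) ∧ |Real.sin φ - (-1)^n * a| < δ} := by
    ext ψ
    simp only [mem_setOf_eq, mem_Ioo, mem_preimage]
    have habs : |Real.sin (ψ + -(n*π)) - (-1:ℝ)^n * a| = |Real.sin ψ - a| := by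
      have : Real.sin (ψ + -(n*π)) - (-1:ℝ)^n * a = (-1:ℝ)^n * (Real.sin ψ - a) := by
        rw [hsin]; ring
      rw [this, abs_mul, eabs, one_mul]
    constructor
    · rintro ⟨⟨h1, h2⟩, h3⟩
      exact ⟨⟨by linarith, by linarith⟩, by rw [habs]; exact h3⟩
    · rintro ⟨⟨h1, h2⟩, h3⟩
      exact ⟨⟨by linarith, by linarith⟩, by rw [habs] at h3; exact h3⟩
  rw [hset, measure_preimage_add_right]
  have := sublevel_sin_interval' ((-1)^n * a) δ (u - n*π) hu'1 hu'2
  calc volume _ ≤ _ := this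
    _ ≤ ENNReal.ofReal (2 * (π * Real.sqrt δ)) := by
        rw [← ENNReal.ofReal_add (by positivity) (by positivity)]
        apply ENNReal.ofReal_le_ofReal; linarith
theorem stmt_13 :
    ∃ σ > (0:ℝ), ∀ k0 k1 k2 : ℤ, k1^2 + k2^2 > 0 →
      ∀ c υ : ℝ, 0 < c → c < 1 → υ > 6 →
        MeasureTheory.volume
          {ϑ : ℝ | ϑ ∈ Set.Ioo (Real.pi/4) (Real.pi/2) ∧
            |(k0 : ℝ) - (k1 : ℝ) * Real.cos ϑ + (k2 : ℝ) * Real.sin ϑ|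
              < c / ((|k0| + |k1| + |k2| : ℤ) : ℝ) ^ υ}
          ≤ ENNReal.ofReal
              (σ * Real.sqrt c /
                (((k1:ℝ)^2 + (k2:ℝ)^2) ^ ((1:ℝ)/4) * ((|k0| + |k1| + |k2| : ℤ) : ℝ) ^ (υ/2))) := by
  refine ⟨2 * π, by positivity, ?_⟩
  intro k0 k1 k2 hk c υ hc hc1 hυ
  have hπ := Real.pi_pos
  set X : ℝ := (k1:ℝ)^2 + (k2:ℝ)^2 with hXdef
  have hX : (0:ℝ) < X := by rw [hXdef]; exact_mod_cast hk
  have hX1 : (1:ℝ) ≤ X := by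
    have h' : (1:ℤ) ≤ k1^2 + k2^2 := hk
    rw [hXdef]; exact_mod_cast h'
  set A : ℝ := Real.sqrt X with hAdef
  have hA : 0 < A := Real.sqrt_pos.2 hX
  set K : ℝ := ((|k0| + |k1| + |k2| : ℤ) : ℝ) with hKdef
  have hKint : (1:ℤ) ≤ |k0| + |k1| + |k2| := by
    by_contra h
    push_neg at h
    have h0 : |k0| = 0 ∧ |k1| = 0 ∧ |k2| = 0 := by
      have := abs_nonneg k0; have := abs_nonneg k1; have := abs_nonneg k2; omega
    have hk1 : k1 = 0 := abs_eq_zero.1 h0.2.1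
    have hk2 : k2 = 0 := abs_eq_zero.1 h0.2.2
    rw [hk1, hk2] at hk; simp at hk
  have hK1 : (1:ℝ) ≤ K := by rw [hKdef]; exact_mod_cast hKint
  have hK0 : (0:ℝ) < K := by linarith
  set ε : ℝ := c / K ^ υ with hεdef
  have hε : 0 < ε := div_pos hc (Real.rpow_pos_of_pos hK0 υ)
  set δ : ℝ := ε / A with hδdef
  have hδ : 0 < δ := div_pos hε hA
  -- phase
  set z : ℂ := (k2:ℝ) + (k1:ℝ) * Complex.I with hzdef
  have hzre : z.re = (k2:ℝ) := by simp [hzdef]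
  have hzim : z.im = (k1:ℝ) := by simp [hzdef]
  have hz0 : z ≠ 0 := by
    intro h
    rw [Complex.ext_iff] at h
    rw [hzre, hzim] at h  -- h : k2 = 0 ∧ k1 = 0 ... careful
    simp at h
    rw [hXdef] at hX
    rw [h.1, h.2] at hX
    norm_num at hX
  have habsz : ‖z‖ = A := by
    rw [Complex.norm_def, Complex.normSq_apply, hzre, hzim, hAdef, hXdef]
    congr 1; ring
  set θ0 : ℝ := Complex.arg z with hθ0
  have hcos : Real.cos θ0 = (k2:ℝ)/A := by rw [hθ0, Complex.cos_arg hz0, hzre, habsz]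
  have hsin : Real.sin θ0 = (k1:ℝ)/A := by rw [hθ0, Complex.sin_arg, hzim, habsz]
  set a : ℝ := -(k0:ℝ)/A with hadef
  have hpt : ∀ ϑ : ℝ, (k0:ℝ) - (k1:ℝ)*Real.cos ϑ + (k2:ℝ)*Real.sin ϑ
      = A * (Real.sin (ϑ - θ0) - a) := by
    intro ϑ
    rw [Real.sin_sub, hcos, hsin, hadef]
    field_simp
    ring
  have hsubset : {ϑ : ℝ | ϑ ∈ Set.Ioo (π/4) (π/2) ∧
        |(k0 : ℝ) - (k1 : ℝ) * Real.cos ϑ + (k2 : ℝ) * Real.sin ϑ| < ε}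
      ⊆ (fun ϑ => ϑ + -θ0) ⁻¹'
        {ψ : ℝ | ψ ∈ Ioo (π/4 - θ0) ((π/4 - θ0) + π/4) ∧ |Real.sin ψ - a| < δ} := by
    rintro ϑ ⟨⟨h1, h2⟩, h3⟩
    rw [hpt, abs_mul, abs_of_pos hA] at h3
    refine ⟨⟨by simp only [mem_preimage]; linarith, by linarith⟩, ?_⟩
    show |Real.sin (ϑ + -θ0) - a| < δ
    rw [← sub_eq_add_neg]
    rw [hδdef]
    exact (lt_div_iff₀' hA).2 h3
  have hmeas := sublevel_sin_interval a δ (π/4 - θ0)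
  have hfinal : 2 * (π * Real.sqrt δ)
      = 2 * π * Real.sqrt c / (X ^ ((1:ℝ)/4) * K ^ (υ/2)) := by
    have h1 : δ = c / (K ^ υ * A) := by rw [hδdef, hεdef, div_div]
    have h2 : Real.sqrt (K ^ υ) = K ^ (υ/2) := by
      rw [Real.sqrt_eq_rpow, ← Real.rpow_mul hK0.le]
      congr 1; ring
    have h3 : Real.sqrt A = X ^ ((1:ℝ)/4) := by
      rw [hAdef, Real.sqrt_eq_rpow, Real.sqrt_eq_rpow, ← Real.rpow_mul hX.le]
      norm_num
    rw [h1, Real.sqrt_div hc.le, Real.sqrt_mul (Real.rpow_nonneg hK0.le υ), h2, h3]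
    ring
  calc volume {ϑ : ℝ | ϑ ∈ Set.Ioo (π/4) (π/2) ∧
        |(k0 : ℝ) - (k1 : ℝ) * Real.cos ϑ + (k2 : ℝ) * Real.sin ϑ| < ε}
      ≤ volume ((fun ϑ => ϑ + -θ0) ⁻¹'
        {ψ : ℝ | ψ ∈ Ioo (π/4 - θ0) ((π/4 - θ0) + π/4) ∧ |Real.sin ψ - a| < δ}) :=
        measure_mono hsubset
    _ = volume {ψ : ℝ | ψ ∈ Ioo (π/4 - θ0) ((π/4 - θ0) + π/4) ∧ |Real.sin ψ - a| < δ} :=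
        measure_preimage_add_right volume _ _
    _ ≤ ENNReal.ofReal (2 * (π * Real.sqrt δ)) := hmeas
    _ = ENNReal.ofReal (2 * π * Real.sqrt c / (X ^ ((1:ℝ)/4) * K ^ (υ/2))) := by rw [hfinal]
end
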